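/- arXiv:1701.00385 — 2 statements merged into one kernel-verified Lean document; each statement's English description precedes it below -/
import Mathlib

section
/- For every integer k ≥ 1 and every real x with -1 ≤ x < 1, one has ln(1-x)^k = (-1)^k · k! · Σ_{n=1}^∞ (x^n / n) · ζ_{n-1}({1}_{k-1}), where ζ_{n-1}({1}_{k-1}) = Σ_{n-1 ≥ k_1 > k_2 > ... > k_{k-1} ≥ 1} 1/(k_1 k_2 ⋯ k_{k-1}) is the multiple harmonic number of weight k-1 with all arguments 1 (and ζ_{n-1}(∅) = 1). -/
open Filter Finset

/-- Multiple harmonic number `ζ_n({1}_m)`. -/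
noncomputable def mhn : ℕ → ℕ → ℝ
  | _, 0 => 1
  | n, m + 1 => ∑ j ∈ Finset.Icc 1 n, (1 / (j : ℝ)) * mhn (j - 1) m

lemma mhn_succ (n m : ℕ) : mhn n (m + 1) = ∑ j ∈ Finset.Icc 1 n, (1 / (j : ℝ)) * mhn (j - 1) m := by
  simp [mhn]

lemma mhn_zero' (m : ℕ) : mhn 0 (m + 1) = 0 := by simp [mhn]

lemma mhn_nonneg : ∀ m n, 0 ≤ mhn n m := by
  intro m
  induction m with
  | zero => intro n; simp [mhn]
  | succ m ih =>
    intro n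
    rw [mhn_succ]
    apply Finset.sum_nonneg
    intro j hj
    have : 0 ≤ (1 / (j:ℝ)) := by positivity
    exact mul_nonneg this (ih _)

lemma mhn_succ_top (n m : ℕ) :
    mhn (n + 1) (m + 1) = mhn n (m + 1) + (1 / ((n:ℝ) + 1)) * mhn n m := by
  rw [mhn_succ, mhn_succ, Finset.sum_Icc_succ_top (by omega : 1 ≤ n + 1)]
  push_cast
  simp

lemma mhn_mono (m n : ℕ) : mhn n m ≤ mhn (n + 1) m := by
  cases m with
  | zero => simp [mhn]
  | succ m =>
    rw [mhn_succ_top]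
    have : 0 ≤ (1 / ((n:ℝ) + 1)) * mhn n m := by
      have := mhn_nonneg m n
      positivity

    linarith

lemma mhn_mono_le {m n n' : ℕ} (h : n ≤ n') : mhn n m ≤ mhn n' m := by
  induction n' with
  | zero => simp_all
  | succ n' ih =>
    rcases Nat.lt_or_ge n (n' + 1) with h' | h'
    · exact le_trans (ih (by omega)) (mhn_mono m n')
    · have : n = n' + 1 := by omega
      simp [this]

/-- The key combinatorial identity:
`∑_{m=1}^n (1/m) ζ_{n-m}({1}_K) = (K+1) ζ_n({1}_{K+1})`. -/
lemma keyT : ∀ K n : ℕ,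
    ∑ m ∈ Finset.Icc 1 n, (1 / (m:ℝ)) * mhn (n - m) K = ((K:ℝ) + 1) * mhn n (K + 1) := by
  intro K
  induction K with
  | zero =>
    intro n
    rw [mhn_succ]
    simp [mhn]
  | succ K ihK =>
    intro n
    induction n with
    | zero => simp [mhn_zero']
    | succ n ihn =>
      have hrefl : ∑ m ∈ Finset.Icc 1 n, (1 / ((n:ℝ) + 1 - (m:ℝ))) * mhn (n - m) K
          = mhn n (K + 1) := by
        rw [mhn_succ]
        refine Finset.sum_nbij' (fun m => n + 1 - m) (fun j => n + 1 - j) ?_ ?_ ?_ ?_ ?_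
        · intro a ha; simp only [Finset.mem_Icc] at *; omega
        · intro a ha; simp only [Finset.mem_Icc] at *; omega
        · intro a ha; simp only [Finset.mem_Icc] at ha
          show n + 1 - (n + 1 - a) = a; omega
        · intro a ha; simp only [Finset.mem_Icc] at ha
          show n + 1 - (n + 1 - a) = a; omega
        · intro m hm
          simp only [Finset.mem_Icc] at hm
          have h1 : ((n + 1 - m : ℕ) : ℝ) = (n:ℝ) + 1 - (m:ℝ) := by
            have : (m:ℝ) ≤ (n:ℝ) + 1 := by exact_mod_cast (by omega : m ≤ n + 1)
            push_cast [Nat.cast_sub (by omega : m ≤ n + 1)]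
            ring
          have h2 : n + 1 - m - 1 = n - m := by omega
          rw [h1, h2]
      -- expand LHS at n+1
      have hstep : ∀ m ∈ Finset.Icc 1 n,
          (1 / (m:ℝ)) * mhn (n + 1 - m) (K + 1)
            = (1 / (m:ℝ)) * mhn (n - m) (K + 1)
              + (1 / (m:ℝ)) * ((1 / (((n:ℝ) - m) + 1)) * mhn (n - m) K) := by
        intro m hm
        simp only [Finset.mem_Icc] at hm
        have h1 : n + 1 - m = (n - m) + 1 := by omega
        have h2 : ((n - m : ℕ) : ℝ) = (n:ℝ) - (m:ℝ) := by
          exact_mod_cast Nat.cast_sub (by omega : m ≤ n)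
        rw [h1, mhn_succ_top, h2]
        ring
      have hpf : ∀ m ∈ Finset.Icc 1 n,
          (1 / (m:ℝ)) * ((1 / (((n:ℝ) - m) + 1)) * mhn (n - m) K)
            = (1 / ((n:ℝ) + 1)) * ((1 / (m:ℝ)) * mhn (n - m) K)
              + (1 / ((n:ℝ) + 1)) * ((1 / ((n:ℝ) + 1 - (m:ℝ))) * mhn (n - m) K) := by
        intro m hm
        simp only [Finset.mem_Icc] at hm
        have hm1 : (1:ℝ) ≤ (m:ℝ) := by exact_mod_cast hm.1
        have hm2 : (m:ℝ) ≤ (n:ℝ) := by exact_mod_cast hm.2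
        have hmne : (m:ℝ) ≠ 0 := by linarith
        have h2 : (n:ℝ) + 1 - (m:ℝ) ≠ 0 := by
          intro h; nlinarith
        have h3 : (n:ℝ) + 1 ≠ 0 := by positivity
        have h4 : (n:ℝ) - (m:ℝ) + 1 = (n:ℝ) + 1 - (m:ℝ) := by ring
        rw [h4]
        field_simp
        ring
      rw [Finset.sum_Icc_succ_top (by omega : 1 ≤ n + 1)]
      have hz : n + 1 - (n + 1) = 0 := by omega
      rw [hz, mhn_zero', mul_zero, add_zero]
      rw [Finset.sum_congr rfl hstep]
      rw [Finset.sum_add_distrib, ihn]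
      rw [Finset.sum_congr rfl hpf, Finset.sum_add_distrib]
      rw [← Finset.mul_sum, ← Finset.mul_sum, ihK n, hrefl]
      rw [mhn_succ_top]
      push_cast
      ring

/-- Coefficients `c_k(n) = ζ_{n-1}({1}_{k-1})/n` (with `c_k(0) = 0` via division by zero). -/
noncomputable def mc (k n : ℕ) : ℝ := mhn (n - 1) (k - 1) / n

lemma mc_zero (k : ℕ) : mc k 0 = 0 := by simp [mc]

lemma mc_nonneg (k n : ℕ) : 0 ≤ mc k n := by
  have := mhn_nonneg (k - 1) (n - 1)
  have : (0:ℝ) ≤ (n:ℝ) := by positivity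
  exact div_nonneg (mhn_nonneg _ _) this

lemma mc_one (n : ℕ) : mc 1 (n + 1) = 1 / ((n:ℝ) + 1) := by
  simp [mc, mhn]

/-- Cauchy product coefficient identity. -/
lemma keyC (k n : ℕ) (hk : 1 ≤ k) :
    ∑ i ∈ Finset.range (n + 1), mc k i * mc 1 (n - i) = ((k:ℝ) + 1) * mc (k + 1) n := by
  cases n with
  | zero => simp [mc_zero]
  | succ N =>
    -- reduce range (N+2) to Icc 1 N : terms i = 0 and i = N+1 vanish
    have hset : Finset.range (N + 2) = insert 0 (insert (N + 1) (Finset.Icc 1 N)) := by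
      ext i
      simp only [Finset.mem_range, Finset.mem_insert, Finset.mem_Icc]
      omega
    rw [hset, Finset.sum_insert (by simp), Finset.sum_insert (by simp)]
    rw [mc_zero, zero_mul]
    have : N + 1 - (N + 1) = 0 := by omega
    rw [this, mc_zero, mul_zero, zero_add, zero_add]
    -- now the main sum
    have hterm : ∀ i ∈ Finset.Icc 1 N,
        mc k i * mc 1 (N + 1 - i)
          = (1 / ((N:ℝ) + 1)) * ((1 / (i:ℝ)) * mhn (i - 1) (k - 1))
            + (1 / ((N:ℝ) + 1)) * ((1 / ((N:ℝ) + 1 - (i:ℝ))) * mhn (i - 1) (k - 1)) := by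
      intro i hi
      simp only [Finset.mem_Icc] at hi
      have h1 : N + 1 - i = (N - i) + 1 := by omega
      have h2 : ((N - i : ℕ) : ℝ) = (N:ℝ) - (i:ℝ) := by
        exact_mod_cast Nat.cast_sub (by omega : i ≤ N)
      rw [h1, mc_one, h2]
      have hi1 : (1:ℝ) ≤ (i:ℝ) := by exact_mod_cast hi.1
      have hi2 : (i:ℝ) ≤ (N:ℝ) := by exact_mod_cast hi.2
      have hine : (i:ℝ) ≠ 0 := by linarith
      have h3 : (N:ℝ) - (i:ℝ) + 1 ≠ 0 := by intro h; nlinarith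
      have h4 : (N:ℝ) + 1 ≠ 0 := by positivity
      have h5 : (N:ℝ) + 1 - (i:ℝ) = (N:ℝ) - (i:ℝ) + 1 := by ring
      rw [mc]
      rw [h5]
      field_simp
      ring
    rw [Finset.sum_congr rfl hterm, Finset.sum_add_distrib, ← Finset.mul_sum, ← Finset.mul_sum]
    -- first sum is mhn N k
    have hfst : ∑ i ∈ Finset.Icc 1 N, (1 / (i:ℝ)) * mhn (i - 1) (k - 1) = mhn N k := by
      obtain ⟨k', rfl⟩ : ∃ k', k = k' + 1 := ⟨k - 1, by omega⟩
      rw [mhn_succ]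
      simp
    -- second sum: reflect then keyT
    have hsnd : ∑ i ∈ Finset.Icc 1 N, (1 / ((N:ℝ) + 1 - (i:ℝ))) * mhn (i - 1) (k - 1)
        = (k:ℝ) * mhn N k := by
      obtain ⟨k', rfl⟩ : ∃ k', k = k' + 1 := ⟨k - 1, by omega⟩
      simp only [Nat.add_sub_cancel]
      have hre : ∑ i ∈ Finset.Icc 1 N, (1 / ((N:ℝ) + 1 - (i:ℝ))) * mhn (i - 1) k'
          = ∑ m ∈ Finset.Icc 1 N, (1 / (m:ℝ)) * mhn (N - m) k' := by
        refine Finset.sum_nbij' (fun i => N + 1 - i) (fun m => N + 1 - m) ?_ ?_ ?_ ?_ ?_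
        · intro a ha; simp only [Finset.mem_Icc] at *; omega
        · intro a ha; simp only [Finset.mem_Icc] at *; omega
        · intro a ha; simp only [Finset.mem_Icc] at ha
          show N + 1 - (N + 1 - a) = a; omega
        · intro a ha; simp only [Finset.mem_Icc] at ha
          show N + 1 - (N + 1 - a) = a; omega
        · intro i hi
          simp only [Finset.mem_Icc] at hi
          have h1 : ((N + 1 - i : ℕ) : ℝ) = (N:ℝ) + 1 - (i:ℝ) := by
            push_cast [Nat.cast_sub (by omega : i ≤ N + 1)]
            ring
          have h2 : N - (N + 1 - i) = i - 1 := by omega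
          rw [h1, h2]
      rw [hre, keyT k' N]
      push_cast
      ring
    rw [hfst, hsnd]
    have h6 : mc (k + 1) (N + 1) = mhn N k / ((N:ℝ) + 1) := by
      simp [mc]
    rw [h6]
    push_cast
    have h4 : (N:ℝ) + 1 ≠ 0 := by positivity
    field_simp
    ring

lemma mhn_le_pow (m : ℕ) : ∀ n : ℕ, mhn n m ≤ (n:ℝ) ^ m := by
  induction m with
  | zero => intro n; simp [mhn]
  | succ m ih =>
    intro n
    cases n with
    | zero => simp [mhn_zero']
    | succ n =>
      rw [mhn_succ]
      have hcast : ((n + 1 : ℕ):ℝ) = (n:ℝ) + 1 := by push_cast; ring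
      rw [hcast]
      have hbound : ∀ j ∈ Finset.Icc 1 (n + 1), (1 / (j:ℝ)) * mhn (j - 1) m ≤ ((n:ℝ) + 1) ^ m := by
        intro j hj
        simp only [Finset.mem_Icc] at hj
        have hj1 : (1:ℝ) ≤ (j:ℝ) := by exact_mod_cast hj.1
        have hb : mhn (j - 1) m ≤ ((j - 1 : ℕ):ℝ) ^ m := ih _
        have hlt : ((j - 1 : ℕ):ℝ) ≤ (n:ℝ) + 1 := by
          have : ((j - 1 : ℕ):ℝ) ≤ ((n + 1 : ℕ):ℝ) := by
            exact_mod_cast (by omega : j - 1 ≤ n + 1)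
          rw [hcast] at this; exact this
        have hb2 : ((j - 1 : ℕ):ℝ) ^ m ≤ ((n:ℝ) + 1) ^ m :=
          pow_le_pow_left₀ (by positivity) hlt m
        have h1j : 1 / (j:ℝ) ≤ 1 := by
          rw [div_le_one (by linarith)]; linarith
        calc (1 / (j:ℝ)) * mhn (j - 1) m ≤ 1 * (((n:ℝ) + 1) ^ m) :=
              mul_le_mul h1j (hb.trans hb2) (mhn_nonneg _ _) (by norm_num)
          _ = ((n:ℝ) + 1) ^ m := by ring
      calc ∑ j ∈ Finset.Icc 1 (n + 1), (1 / (j:ℝ)) * mhn (j - 1) m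
          ≤ ∑ _j ∈ Finset.Icc 1 (n + 1), ((n:ℝ) + 1) ^ m := Finset.sum_le_sum hbound
        _ = ((n:ℝ) + 1) * ((n:ℝ) + 1) ^ m := by
            rw [Finset.sum_const, Nat.card_Icc, nsmul_eq_mul]
            norm_num
        _ = ((n:ℝ) + 1) ^ (m + 1) := by ring

/-- `mhn n m ≤ C √(n+1)` for a constant depending only on `m`. -/
lemma mhn_le_sqrt (m : ℕ) : ∃ C : ℝ, 1 ≤ C ∧
    ∀ n : ℕ, mhn n m ≤ C * ((n:ℝ) + 1) ^ ((1:ℝ)/2) := by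
  -- harmonic bound : mhn n m ≤ (hsum n)^m ≤ (1 + log n)^m
  have hsum_nonneg : ∀ n : ℕ, (0:ℝ) ≤ ∑ j ∈ Finset.Icc 1 n, (1 / (j:ℝ)) := by
    intro n; apply Finset.sum_nonneg; intro j hj; positivity
  have hsum_mono : ∀ {a b : ℕ}, a ≤ b →
      ∑ j ∈ Finset.Icc 1 a, (1 / (j:ℝ)) ≤ ∑ j ∈ Finset.Icc 1 b, (1 / (j:ℝ)) := by
    intro a b hab
    apply Finset.sum_le_sum_of_subset_of_nonneg
    · apply Finset.Icc_subset_Icc_right hab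
    · intro j _ _; positivity
  have hmh : ∀ n : ℕ, mhn n m ≤ (∑ j ∈ Finset.Icc 1 n, (1 / (j:ℝ))) ^ m := by
    induction m with
    | zero => intro n; simp [mhn]
    | succ m ih =>
      intro n
      rw [mhn_succ]
      calc ∑ j ∈ Finset.Icc 1 n, (1 / (j:ℝ)) * mhn (j - 1) m
          ≤ ∑ j ∈ Finset.Icc 1 n, (1 / (j:ℝ)) * (∑ i ∈ Finset.Icc 1 n, (1 / (i:ℝ))) ^ m := by
            apply Finset.sum_le_sum
            intro j hj
            simp only [Finset.mem_Icc] at hj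
            have h1 : mhn (j - 1) m ≤ (∑ i ∈ Finset.Icc 1 (j-1), (1 / (i:ℝ))) ^ m := ih _
            have h2 : (∑ i ∈ Finset.Icc 1 (j-1), (1 / (i:ℝ))) ^ m
                ≤ (∑ i ∈ Finset.Icc 1 n, (1 / (i:ℝ))) ^ m :=
              pow_le_pow_left₀ (hsum_nonneg _) (hsum_mono (by omega)) m
            have : (0:ℝ) ≤ 1 / (j:ℝ) := by positivity
            exact mul_le_mul_of_nonneg_left (h1.trans h2) this
        _ = (∑ j ∈ Finset.Icc 1 n, (1 / (j:ℝ))) * (∑ i ∈ Finset.Icc 1 n, (1 / (i:ℝ))) ^ m := by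
            rw [← Finset.sum_mul]
        _ = (∑ j ∈ Finset.Icc 1 n, (1 / (j:ℝ))) ^ (m + 1) := by ring
  -- hsum n ≤ 1 + log n ≤ 1 + log (n+1)
  have hsum_log : ∀ n : ℕ, ∑ j ∈ Finset.Icc 1 n, (1 / (j:ℝ)) ≤ 1 + Real.log ((n:ℝ) + 1) := by
    intro n
    have h1 : (harmonic n : ℝ) ≤ 1 + Real.log n := harmonic_le_one_add_log n
    have h2 : (harmonic n : ℝ) = ∑ j ∈ Finset.Icc 1 n, (1 / (j:ℝ)) := by
      rw [harmonic_eq_sum_Icc]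
      push_cast
      simp [one_div]
    have h3 : Real.log (n:ℝ) ≤ Real.log ((n:ℝ) + 1) := by
      rcases Nat.eq_zero_or_pos n with h | h
      · simp [h]
      · apply Real.log_le_log (by exact_mod_cast h) (by linarith)
    linarith [h2 ▸ h1]
  -- 1 + log (n+1) ≤ (1 + 2(m+1)) * (n+1)^(1/(2(m+1)))
  set M : ℕ := m + 1 with hM
  set ε : ℝ := 1 / (2 * M) with hε
  have hε_pos : 0 < ε := by positivity
  have hlog : ∀ n : ℕ, 1 + Real.log ((n:ℝ) + 1) ≤ (1 + 2 * (M:ℝ)) * ((n:ℝ) + 1) ^ ε := by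
    intro n
    have h0 : (1:ℝ) ≤ (n:ℝ) + 1 := by
      have := Nat.cast_nonneg (α := ℝ) n
      linarith
    have h1 : Real.log ((n:ℝ) + 1) ≤ ((n:ℝ) + 1) ^ ε / ε :=
      Real.log_le_rpow_div (by positivity) hε_pos
    have h2 : ((n:ℝ) + 1) ^ ε / ε = 2 * (M:ℝ) * ((n:ℝ) + 1) ^ ε := by
      rw [hε]
      have : (2 * (M:ℝ)) ≠ 0 := by positivity
      field_simp
    have h3 : (1:ℝ) ≤ ((n:ℝ) + 1) ^ ε := by
      apply Real.one_le_rpow h0 (le_of_lt hε_pos)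
    nlinarith [Real.rpow_nonneg (by positivity : (0:ℝ) ≤ (n:ℝ)+1) ε]
  refine ⟨(1 + 2 * (M:ℝ)) ^ m, ?_, ?_⟩
  · apply one_le_pow₀
    have : (0:ℝ) ≤ (M:ℝ) := Nat.cast_nonneg M
    linarith
  · intro n
    have hnn : (0:ℝ) ≤ (n:ℝ) + 1 := by positivity
    have key : mhn n m ≤ ((1 + 2 * (M:ℝ)) * ((n:ℝ) + 1) ^ ε) ^ m := by
      refine (hmh n).trans ?_
      apply pow_le_pow_left₀ (hsum_nonneg n)
      exact (hsum_log n).trans (hlog n)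
    refine key.trans ?_
    rw [mul_pow]
    apply mul_le_mul_of_nonneg_left _ (by positivity)
    rw [← Real.rpow_natCast (((n:ℝ) + 1) ^ ε) m, ← Real.rpow_mul hnn]
    apply Real.rpow_le_rpow_of_exponent_le
    · exact_mod_cast le_add_of_nonneg_left (by positivity)
    · rw [hε, hM]
      rw [div_mul_eq_mul_div, one_mul]
      rw [div_le_div_iff₀ (by positivity) (by norm_num)]
      push_cast
      nlinarith [Nat.cast_nonneg (α := ℝ) m]

lemma summable_norm_mc {x : ℝ} (hx : |x| < 1) (k : ℕ) :
    Summable fun n => ‖mc k n * x ^ n‖ := by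
  have hgeom : Summable fun n : ℕ => (n:ℝ) ^ (k - 1) * |x| ^ n := by
    simpa using summable_pow_mul_geometric_of_norm_lt_one (k - 1) (r := |x|) (by simpa using hx)
  apply Summable.of_nonneg_of_le (fun n => norm_nonneg _) _ hgeom
  intro n
  rw [norm_mul, norm_pow, Real.norm_eq_abs, Real.norm_eq_abs]
  apply mul_le_mul_of_nonneg_right _ (pow_nonneg (abs_nonneg x) n)
  rw [abs_of_nonneg (mc_nonneg k n)]
  cases n with
  | zero => rw [mc_zero]; positivity
  | succ n =>
    rw [mc]
    have h1 : mhn (n + 1 - 1) (k - 1) ≤ ((n + 1 - 1 : ℕ):ℝ) ^ (k - 1) := mhn_le_pow _ _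
    have h2 : ((n + 1 - 1 : ℕ):ℝ) ^ (k - 1) ≤ ((n + 1 : ℕ):ℝ) ^ (k - 1) := by
      apply pow_le_pow_left₀ (by positivity)
      exact_mod_cast (by omega : n + 1 - 1 ≤ n + 1)
    have h3 : (1:ℝ) ≤ ((n + 1 : ℕ):ℝ) := by exact_mod_cast Nat.one_le_iff_ne_zero.mpr (by omega)
    calc mhn (n + 1 - 1) (k - 1) / ((n + 1 : ℕ):ℝ)
        ≤ mhn (n + 1 - 1) (k - 1) := div_le_self (mhn_nonneg _ _) h3
      _ ≤ ((n + 1 : ℕ):ℝ) ^ (k - 1) := h1.trans h2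

lemma hasSum_interior : ∀ k : ℕ, 1 ≤ k → ∀ x : ℝ, |x| < 1 →
    HasSum (fun n => mc k n * x ^ n) ((-Real.log (1 - x)) ^ k / (Nat.factorial k : ℝ)) := by
  intro k hk
  induction k, hk using Nat.le_induction with
  | base =>
    intro x hx
    have h := Real.hasSum_pow_div_log_of_abs_lt_one hx
    have h' : HasSum (fun n : ℕ => mc 1 (n + 1) * x ^ (n + 1)) (-Real.log (1 - x)) := by
      apply h.congr_fun
      intro n
      rw [mc_one]
      ring
    have h2 := (hasSum_nat_add_iff (f := fun n => mc 1 n * x ^ n) 1).mp h'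
    simpa [mc_zero, Nat.factorial] using h2
  | succ k hk ih =>
    intro x hx
    have hK := ih x hx
    have h1 : HasSum (fun n => mc 1 n * x ^ n) ((-Real.log (1 - x)) ^ 1 / (Nat.factorial 1 : ℝ)) := by
      -- reuse base case via ih? only holds for k; redo
      have h := Real.hasSum_pow_div_log_of_abs_lt_one hx
      have h' : HasSum (fun n : ℕ => mc 1 (n + 1) * x ^ (n + 1)) (-Real.log (1 - x)) := by
        apply h.congr_fun
        intro n
        rw [mc_one]
        ring
      have h2 := (hasSum_nat_add_iff (f := fun n => mc 1 n * x ^ n) 1).mp h'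
      simpa [mc_zero, Nat.factorial] using h2
    have hfn := summable_norm_mc hx k
    have hgn := summable_norm_mc hx 1
    have hprod := tsum_mul_tsum_eq_tsum_sum_antidiagonal_of_summable_norm hfn hgn
    rw [hK.tsum_eq, h1.tsum_eq] at hprod
    have hsumm : Summable (fun n => ∑ kl ∈ Finset.HasAntidiagonal.antidiagonal n,
        (mc k kl.1 * x ^ kl.1) * (mc 1 kl.2 * x ^ kl.2)) :=
      (summable_norm_sum_mul_antidiagonal_of_summable_norm hfn hgn).of_norm
    have hH : HasSum (fun n => ∑ kl ∈ Finset.HasAntidiagonal.antidiagonal n,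
        (mc k kl.1 * x ^ kl.1) * (mc 1 kl.2 * x ^ kl.2))
        ((-Real.log (1 - x)) ^ k / (Nat.factorial k : ℝ)
          * ((-Real.log (1 - x)) ^ 1 / (Nat.factorial 1 : ℝ))) := by
      have := hsumm.hasSum
      rwa [← hprod] at this
    have hterm : ∀ n : ℕ, ∑ kl ∈ Finset.HasAntidiagonal.antidiagonal n,
        (mc k kl.1 * x ^ kl.1) * (mc 1 kl.2 * x ^ kl.2)
          = ((k:ℝ) + 1) * (mc (k + 1) n * x ^ n) := by
      intro n
      rw [Finset.Nat.sum_antidiagonal_eq_sum_range_succ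
        (fun i j => (mc k i * x ^ i) * (mc 1 j * x ^ j))]
      have : ∀ i ∈ Finset.range (n + 1),
          (mc k i * x ^ i) * (mc 1 (n - i) * x ^ (n - i)) = (mc k i * mc 1 (n - i)) * x ^ n := by
        intro i hi
        simp only [Finset.mem_range] at hi
        have hin : i + (n - i) = n := by omega
        calc (mc k i * x ^ i) * (mc 1 (n - i) * x ^ (n - i))
            = mc k i * mc 1 (n - i) * (x ^ i * x ^ (n - i)) := by ring
          _ = mc k i * mc 1 (n - i) * x ^ n := by rw [← pow_add, hin]
      rw [Finset.sum_congr rfl this, ← Finset.sum_mul, keyC k n hk]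
      ring
    have hH2 : HasSum (fun n => ((k:ℝ) + 1) * (mc (k + 1) n * x ^ n))
        ((-Real.log (1 - x)) ^ k / (Nat.factorial k : ℝ)
          * ((-Real.log (1 - x)) ^ 1 / (Nat.factorial 1 : ℝ))) := by
      apply hH.congr_fun
      intro n
      exact (hterm n).symm
    have hne : ((k:ℝ) + 1) ≠ 0 := by positivity
    have hH3 := hH2.div_const ((k:ℝ) + 1)
    have heq : ∀ n : ℕ, ((k:ℝ) + 1) * (mc (k + 1) n * x ^ n) / ((k:ℝ) + 1)
        = mc (k + 1) n * x ^ n := by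
      intro n; field_simp
    have hH4 := hH3.congr_fun (fun n => (heq n).symm)
    convert hH4 using 1
    case e'_3 => rfl
    rw [Nat.factorial_succ]
    push_cast
    field_simp
    ring

/-- Convergence of alternating series with terms of bounded variation tending to zero. -/
lemma alt_conv (a : ℕ → ℝ) (h0 : Tendsto a atTop (nhds 0))
    (hv : Summable fun n => |a (n + 1) - a n|) :
    ∃ l, Tendsto (fun N => ∑ n ∈ Finset.range N, (-1:ℝ) ^ n * a n) atTop (nhds l) := by
  set g : ℕ → ℝ := fun n => |a (n + 1) - a n| with hg
  set t : ℕ → ℝ := fun n => ∑' m, g (m + n) with ht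
  have hts : ∀ n, t n = g n + t (n + 1) := by
    intro n
    have hsummable : Summable fun m => g (m + n) := (summable_nat_add_iff n).mpr hv
    have := Summable.tsum_eq_zero_add hsummable
    rw [ht]
    simp only []
    rw [this, zero_add]
    congr 1
    apply tsum_congr
    intro m
    congr 1
    omega
  have htt : Tendsto t atTop (nhds 0) := tendsto_sum_nat_add g
  have ht_nonneg : ∀ n, 0 ≤ t n := by
    intro n
    apply tsum_nonneg
    intro m
    exact abs_nonneg _
  have ht_anti : Antitone t := by
    apply antitone_nat_of_succ_le
    intro n
    rw [hts n]
    have : 0 ≤ g n := abs_nonneg _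
    linarith
  set u : ℕ → ℝ := fun n => a n + t n with hu
  have hu_anti : Antitone u := by
    apply antitone_nat_of_succ_le
    intro n
    have h1 := hts n
    have h2 : a (n + 1) - a n ≤ g n := le_abs_self _
    simp only [hu]
    linarith
  have hu0 : Tendsto u atTop (nhds 0) := by
    have := h0.add htt
    simpa using this
  obtain ⟨l1, hl1⟩ := hu_anti.tendsto_alternating_series_of_tendsto_zero hu0
  obtain ⟨l2, hl2⟩ := ht_anti.tendsto_alternating_series_of_tendsto_zero htt
  refine ⟨l1 - l2, ?_⟩
  have := hl1.sub hl2
  apply this.congr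
  intro N
  rw [← Finset.sum_sub_distrib]
  apply Finset.sum_congr rfl
  intro n _
  simp only [hu]
  ring

/-- Main helper : partial sums over `range` converge, for all `-1 ≤ x < 1`. -/
lemma main_range (k : ℕ) (hk : 1 ≤ k) (x : ℝ) (hx1 : -1 ≤ x) (hx2 : x < 1) :
    Tendsto (fun N : ℕ => ∑ n ∈ Finset.range N, mc k n * x ^ n) atTop
      (nhds ((-Real.log (1 - x)) ^ k / (Nat.factorial k : ℝ))) := by
  rcases eq_or_lt_of_le hx1 with h | h
  · -- boundary x = -1
    subst h
    set a : ℕ → ℝ := mc k with ha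
    obtain ⟨C, hC1, hC⟩ := mhn_le_sqrt (k - 1)
    obtain ⟨C', hC'1, hC'⟩ := mhn_le_sqrt (k - 2)
    -- a n → 0
    have h0 : Tendsto a atTop (nhds 0) := by
      have hg : Tendsto (fun n : ℕ => C * (n:ℝ) ^ (-((1:ℝ)/2))) atTop (nhds 0) := by
        have h1 : Tendsto (fun y : ℝ => y ^ (-((1:ℝ)/2))) atTop (nhds 0) :=
          tendsto_rpow_neg_atTop (by norm_num)
        have h2 := (h1.comp tendsto_natCast_atTop_atTop).const_mul C
        simpa using h2
      apply squeeze_zero' (Eventually.of_forall fun n => mc_nonneg k n) _ hg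
      filter_upwards [eventually_ge_atTop 1] with n hn
      have hn0 : (0:ℝ) < (n:ℝ) := by exact_mod_cast hn
      have hcast : ((n - 1 : ℕ):ℝ) + 1 = (n:ℝ) := by
        push_cast [Nat.cast_sub hn]
        ring
      have h1 : mhn (n - 1) (k - 1) ≤ C * (n:ℝ) ^ ((1:ℝ)/2) := by
        have := hC (n - 1)
        rwa [hcast] at this
      have h2 : a n ≤ C * (n:ℝ) ^ ((1:ℝ)/2) / (n:ℝ) := by
        simp only [ha, mc]
        exact (div_le_div_iff_of_pos_right hn0).mpr h1
      refine h2.trans_eq ?_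
      rw [mul_div_assoc]
      congr 1
      rw [show (-((1:ℝ)/2)) = (1:ℝ)/2 - 1 by ring, Real.rpow_sub hn0, Real.rpow_one]
    -- bounded variation
    have hvar : Summable fun n => |a (n + 1) - a n| := by
      apply (summable_nat_add_iff 1).mp
      set D : ℝ := C' + C with hD
      have hsumg : Summable fun n : ℕ => D * ((n:ℝ) + 1) ^ (-((3:ℝ)/2)) := by
        have h1 : Summable fun n : ℕ => (n:ℝ) ^ (-((3:ℝ)/2)) :=
          (Real.summable_nat_rpow).mpr (by norm_num)
        have h2 : Summable fun n : ℕ => ((n + 1 : ℕ):ℝ) ^ (-((3:ℝ)/2)) :=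
          (summable_nat_add_iff 1).mpr h1
        have h3 : Summable fun n : ℕ => ((n:ℝ) + 1) ^ (-((3:ℝ)/2)) := by
          apply h2.congr
          intro n
          norm_num
        exact h3.mul_left D
      apply Summable.of_nonneg_of_le (fun n => abs_nonneg _) _ hsumg
      intro n
      set y : ℝ := (n:ℝ) + 1 with hy
      have hy0 : (0:ℝ) < y := by positivity
      have hy1 : (1:ℝ) ≤ y := by rw [hy]; have : (0:ℝ) ≤ (n:ℝ) := Nat.cast_nonneg n; linarith
      -- the difference identity / bound
      have hdiff : |a (n + 1 + 1) - a (n + 1)| ≤ (mhn n (k - 2) + mhn n (k - 1)) / (y * (y + 1)) := by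
        have hy_ne : y ≠ 0 := ne_of_gt hy0
        have hy1_ne : y + 1 ≠ 0 := by positivity
        have hnum1 : a (n + 1) = mhn n (k - 1) / y := by
          simp only [ha, mc]
          push_cast [Nat.add_sub_cancel]
          rw [hy]
        rcases Nat.lt_or_ge k 2 with hk2 | hk2
        · -- k = 1
          have hk1 : k = 1 := by omega
          subst hk1
          have h1 : a (n + 1 + 1) = 1 / (y + 1) := by
            simp only [ha, mc]
            push_cast [Nat.add_sub_cancel]
            rw [hy]
            norm_num [mhn]
          have h2 : a (n + 1) = 1 / y := by
            rw [hnum1]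
            norm_num [mhn]
          rw [h1, h2]
          have hval : 1 / (y + 1) - 1 / y = -(1 / (y * (y + 1))) := by
            field_simp
            ring
          rw [hval, abs_neg, abs_of_nonneg (by positivity)]
          rw [show mhn n (1 - 2) + mhn n (1 - 1) = 2 by norm_num [mhn]]
          rw [div_le_div_iff₀ (by positivity) (by positivity)]
          nlinarith
        · -- k ≥ 2
          obtain ⟨K, rfl⟩ : ∃ K, k = K + 2 := ⟨k - 2, by omega⟩
          have hred1 : K + 2 - 1 = K + 1 := by omega
          have hred2 : K + 2 - 2 = K := by omega
          rw [hred1] at hnum1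
          have hnum2 : a (n + 1 + 1) = (mhn n (K + 1) + (1 / y) * mhn n K) / (y + 1) := by
            simp only [ha, mc, hred1]
            have : (n + 1 + 1) - 1 = n + 1 := by omega
            rw [this, mhn_succ_top]
            have hc : ((n + 1 + 1 : ℕ):ℝ) = y + 1 := by rw [hy]; push_cast; ring
            rw [hc, hy]
          rw [hnum2, hnum1, hred2, hred1]
          have hvv : (mhn n (K + 1) + (1 / y) * mhn n K) / (y + 1) - mhn n (K + 1) / y
              = (mhn n K - mhn n (K + 1)) / (y * (y + 1)) := by
            field_simp
            ring
          rw [hvv, abs_div, abs_of_pos (by positivity : (0:ℝ) < y * (y + 1))]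
          have hp : 0 ≤ mhn n K := mhn_nonneg K n
          have hq : 0 ≤ mhn n (K + 1) := mhn_nonneg (K + 1) n
          exact (div_le_div_iff_of_pos_right (by positivity)).mpr
            (abs_le.mpr ⟨by linarith, by linarith⟩)
      -- bound the harmonic numbers
      have hb1 : mhn n (k - 2) ≤ C' * y ^ ((1:ℝ)/2) := hC' n
      have hb2 : mhn n (k - 1) ≤ C * y ^ ((1:ℝ)/2) := hC n
      have hrp : D * y ^ ((1:ℝ)/2) / (y * (y + 1)) ≤ D * y ^ (-((3:ℝ)/2)) := by
        have e1 : y ^ (-((3:ℝ)/2)) = y ^ ((1:ℝ)/2) / (y * y) := by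
          rw [show (-((3:ℝ)/2)) = (1:ℝ)/2 - 2 by ring, Real.rpow_sub hy0]
          congr 1
          rw [show (2:ℝ) = ((2:ℕ):ℝ) by norm_num, Real.rpow_natCast]
          ring
        rw [e1, ← mul_div_assoc, div_le_div_iff₀ (by positivity) (by positivity)]
        have hD0 : 0 ≤ D * y ^ ((1:ℝ)/2) := by positivity
        have hyy : y * y ≤ y * (y + 1) := by nlinarith
        have := mul_le_mul_of_nonneg_left hyy hD0
        linarith
      calc |a (n + 1 + 1) - a (n + 1)|
          ≤ (mhn n (k - 2) + mhn n (k - 1)) / (y * (y + 1)) := hdiff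
        _ ≤ D * y ^ ((1:ℝ)/2) / (y * (y + 1)) := by
            apply (div_le_div_iff_of_pos_right (by positivity)).mpr
            rw [hD, add_mul]
            exact add_le_add hb1 hb2
        _ ≤ D * y ^ (-((3:ℝ)/2)) := hrp
    obtain ⟨l, hl⟩ := alt_conv a h0 hvar
    -- Abel's theorem
    have habel := Real.tendsto_tsum_powerSeries_nhdsWithin_lt hl
    have hioo : Set.Ioo (0:ℝ) 1 ∈ nhdsWithin (1:ℝ) (Set.Iio 1) :=
      Ioo_mem_nhdsLT_of_mem (by constructor <;> norm_num)
    have hcong : ∀ᶠ y in nhdsWithin (1:ℝ) (Set.Iio 1),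
        (∑' n, ((-1:ℝ) ^ n * a n) * y ^ n)
          = (-Real.log (1 + y)) ^ k / (Nat.factorial k : ℝ) := by
      filter_upwards [hioo] with y hy
      have hy' : |(-y)| < 1 := by rw [abs_neg, abs_of_pos hy.1]; exact hy.2
      have hs := hasSum_interior k hk (-y) hy'
      have hs2 : HasSum (fun n => ((-1:ℝ) ^ n * a n) * y ^ n)
          ((-Real.log (1 - -y)) ^ k / (Nat.factorial k : ℝ)) := by
        apply hs.congr_fun
        intro n
        rw [neg_pow]
        rw [ha]
        ring
      rw [hs2.tsum_eq]
      norm_num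
    have hcont : Tendsto (fun y : ℝ => (-Real.log (1 + y)) ^ k / (Nat.factorial k : ℝ))
        (nhdsWithin (1:ℝ) (Set.Iio 1)) (nhds ((-Real.log 2) ^ k / (Nat.factorial k : ℝ))) := by
      apply Tendsto.mono_left _ nhdsWithin_le_nhds
      have hca : ContinuousAt (fun y : ℝ => (-Real.log (1 + y)) ^ k / (Nat.factorial k : ℝ)) 1 := by
        apply ContinuousAt.div_const
        apply ContinuousAt.pow
        apply ContinuousAt.neg
        have h1 : ContinuousAt (fun y : ℝ => 1 + y) 1 := by fun_prop
        have h2 : ContinuousAt Real.log ((fun y : ℝ => 1 + y) 1) :=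
          Real.continuousAt_log (by norm_num)
        exact h2.comp h1
      have := hca.tendsto
      convert this using 2
      norm_num
    have hlval : l = (-Real.log 2) ^ k / (Nat.factorial k : ℝ) :=
      tendsto_nhds_unique (habel.congr' hcong) hcont
    have hfin : Tendsto (fun N : ℕ => ∑ n ∈ Finset.range N, (-1:ℝ) ^ n * a n) atTop
        (nhds ((-Real.log 2) ^ k / (Nat.factorial k : ℝ))) := hlval ▸ hl
    have : (1 : ℝ) - (-1) = 2 := by norm_num
    rw [this]
    apply hfin.congr
    intro N
    apply Finset.sum_congr rfl
    intro n _
    rw [ha]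
    ring
  · have hx : |x| < 1 := abs_lt.mpr ⟨h, hx2⟩
    exact (hasSum_interior k hk x hx).tendsto_sum_nat

theorem stmt_0 (k : ℕ) (hk : 1 ≤ k) (x : ℝ) (hx1 : -1 ≤ x) (hx2 : x < 1) :
    Tendsto (fun N : ℕ =>
        (-1 : ℝ) ^ k * (Nat.factorial k : ℝ) *
          ∑ n ∈ Finset.Icc 1 N, x ^ n / (n : ℝ) * mhn (n - 1) (k - 1))
      atTop (nhds ((Real.log (1 - x)) ^ k)) := by
  have h := main_range k hk x hx1 hx2
  have h2 := h.comp (tendsto_add_atTop_nat 1)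
  have h3 := h2.const_mul ((-1 : ℝ) ^ k * (Nat.factorial k : ℝ))
  have heq : ∀ N : ℕ, ∑ n ∈ Finset.Icc 1 N, x ^ n / (n : ℝ) * mhn (n - 1) (k - 1)
      = ∑ n ∈ Finset.range (N + 1), mc k n * x ^ n := by
    intro N
    have hset : Finset.range (N + 1) = insert 0 (Finset.Icc 1 N) := by
      ext i
      simp only [Finset.mem_range, Finset.mem_insert, Finset.mem_Icc]
      omega
    rw [hset, Finset.sum_insert (by simp), mc_zero, zero_mul, zero_add]
    apply Finset.sum_congr rfl
    intro n _
    rw [mc]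
    ring
  have hval : (-1 : ℝ) ^ k * (Nat.factorial k : ℝ)
      * ((-Real.log (1 - x)) ^ k / (Nat.factorial k : ℝ)) = (Real.log (1 - x)) ^ k := by
    have hne : (Nat.factorial k : ℝ) ≠ 0 := by
      exact_mod_cast Nat.factorial_ne_zero k
    have h7 : (-1 : ℝ) ^ k * (-Real.log (1 - x)) ^ k = (Real.log (1 - x)) ^ k := by
      rw [← mul_pow, neg_one_mul, neg_neg]
    rw [mul_assoc, mul_comm ((Nat.factorial k : ℝ)) _, div_mul_cancel₀ _ hne, h7]
  rw [← hval]
  apply h3.congr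
  intro N
  simp only [Function.comp]
  rw [heq N]
end

section
/- The multiple polylogarithm value ζ(2,1; 1/2) := Σ_{n > m ≥ 1} (1/2)^n / (n^2 m) equals (1/8) ζ(3) − (1/6) ln^3 2. -/
open Filter

/-- Riemann zeta value at a positive integer. -/
noncomputable def zetaR (s : ℕ) : ℝ := ∑' n : ℕ, 1 / ((n : ℝ) + 1) ^ s

/-- Polylogarithm Li_p(x). -/
noncomputable def polyLog (p : ℕ) (x : ℝ) : ℝ := ∑' n : ℕ, x ^ (n + 1) / ((n : ℝ) + 1) ^ p

open Filter Real MeasureTheory Set intervalIntegral Topology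




noncomputable def harm (N : ℕ) : ℝ := ∑ i ∈ Finset.range N, 1 / ((i : ℝ) + 1)

lemma harm_nonneg (N : ℕ) : 0 ≤ harm N :=
  Finset.sum_nonneg fun i _ => by positivity

lemma harm_le (N : ℕ) : harm N ≤ N := by
  calc harm N ≤ ∑ i ∈ Finset.range N, (1:ℝ) := by
        refine Finset.sum_le_sum fun i _ => ?_
        rw [div_le_one (by positivity)]
        have : (0:ℝ) ≤ (i:ℝ) := Nat.cast_nonneg i
        linarith
    _ = N := by simp

lemma harm_coeff (n : ℕ) :
    ∑ i ∈ Finset.range (n + 1), 1 / (((i:ℝ) + 1) * (((n - i : ℕ) : ℝ) + 1))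
      = 2 * harm (n + 1) / ((n : ℝ) + 2) := by
  have key : ∀ i ∈ Finset.range (n + 1),
      1 / (((i:ℝ) + 1) * (((n - i : ℕ) : ℝ) + 1))
        = (1 / ((n:ℝ) + 2)) * (1 / ((i:ℝ) + 1) + 1 / (((n - i : ℕ) : ℝ) + 1)) := by
    intro i hi
    have hin : i ≤ n := Nat.lt_succ_iff.mp (Finset.mem_range.mp hi)
    have hcast : ((n - i : ℕ) : ℝ) = (n : ℝ) - (i : ℝ) := by
      exact Nat.cast_sub hin
    rw [hcast]
    have h1 : (i:ℝ) + 1 ≠ 0 := by positivity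
    have h2 : (n:ℝ) - i + 1 ≠ 0 := by
      have : (i:ℝ) ≤ n := by exact_mod_cast hin
      nlinarith
    field_simp
    ring
  rw [Finset.sum_congr rfl key, ← Finset.mul_sum, Finset.sum_add_distrib]
  have refl : ∑ i ∈ Finset.range (n + 1), 1 / (((n - i : ℕ) : ℝ) + 1)
      = ∑ i ∈ Finset.range (n + 1), 1 / ((i:ℝ) + 1) := by
    exact Finset.sum_range_reflect (fun j => 1 / ((j:ℝ) + 1)) (n+1)
  rw [refl]
  have : (∑ i ∈ Finset.range (n + 1), 1 / ((i:ℝ) + 1)) = harm (n+1) := rfl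
  rw [this]
  ring

lemma sq_log_hasSum {x : ℝ} (h0 : 0 ≤ x) (h1 : x < 1) :
    HasSum (fun n : ℕ => 2 * harm (n + 1) / ((n : ℝ) + 2) * x ^ (n + 2))
      ((Real.log (1 - x)) ^ 2) := by
  have hx : |x| < 1 := by rwa [abs_of_nonneg h0]
  set a : ℕ → ℝ := fun n => x ^ (n + 1) / ((n : ℝ) + 1) with ha
  have hlog : HasSum a (-Real.log (1 - x)) := Real.hasSum_pow_div_log_of_abs_lt_one hx
  have hnorm : Summable fun n => ‖a n‖ := by
    apply Summable.of_nonneg_of_le (fun n => norm_nonneg _) (fun n => ?_)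
      ((summable_geometric_of_lt_one h0 h1).mul_left x)
    simp only [ha, norm_div, norm_pow, Real.norm_eq_abs, abs_of_nonneg h0]
    rw [abs_of_nonneg (by positivity : (0:ℝ) ≤ (n:ℝ)+1)]
    calc x ^ (n+1) / ((n:ℝ)+1) ≤ x ^ (n+1) / 1 := by
            apply div_le_div_of_nonneg_left (by positivity) (by norm_num) (by exact_mod_cast Nat.le_add_left 1 n)
          _ = x * x ^ n := by rw [div_one, pow_succ, mul_comm]
  have hanti : ∀ n : ℕ, ∑ kl ∈ Finset.HasAntidiagonal.antidiagonal n, a kl.1 * a kl.2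
      = 2 * harm (n + 1) / ((n : ℝ) + 2) * x ^ (n + 2) := by
    intro n
    rw [Finset.Nat.sum_antidiagonal_eq_sum_range_succ_mk]
    have : ∀ i ∈ Finset.range (n+1), a i * a (n - i)
        = x ^ (n + 2) * (1 / (((i:ℝ) + 1) * (((n - i : ℕ) : ℝ) + 1))) := by
      intro i hi
      have hin : i ≤ n := Nat.lt_succ_iff.mp (Finset.mem_range.mp hi)
      simp only [ha]
      rw [div_mul_div_comm, ← pow_add]
      have : i + 1 + (n - i + 1) = n + 2 := by omega
      rw [this]
      ring
    rw [Finset.sum_congr rfl this, ← Finset.mul_sum, harm_coeff]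
    ring
  have hsummable : Summable fun n => ∑ kl ∈ Finset.HasAntidiagonal.antidiagonal n, a kl.1 * a kl.2 :=
    Summable.of_norm (summable_norm_sum_mul_antidiagonal_of_summable_norm hnorm hnorm)
  have htsum := tsum_mul_tsum_eq_tsum_sum_antidiagonal_of_summable_norm hnorm hnorm
  rw [hlog.tsum_eq] at htsum
  have hsum2 : Summable (fun n : ℕ => 2 * harm (n + 1) / ((n : ℝ) + 2) * x ^ (n + 2)) :=
    hsummable.congr hanti
  have hval : ∑' n : ℕ, 2 * harm (n + 1) / ((n : ℝ) + 2) * x ^ (n + 2)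
      = (Real.log (1 - x)) ^ 2 := by
    rw [← tsum_congr hanti, ← htsum]; ring
  exact hval ▸ hsum2.hasSum


lemma log_sq_le_rpow {u : ℝ} (h0 : 0 < u) (h1 : u ≤ 1) :
    (Real.log u) ^ 2 ≤ 16 * u ^ (-(1/2) : ℝ) := by
  set y := u ^ (-(1/4) : ℝ) with hy
  have hypos : 0 < y := Real.rpow_pos_of_pos h0 _
  have hlogy : Real.log y = -(1/4) * Real.log u := Real.log_rpow h0 _
  have hyle : Real.log y ≤ y - 1 := Real.log_le_sub_one_of_pos hypos
  have hlogu : Real.log u ≤ 0 := Real.log_nonpos h0.le h1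
  have hlogy0 : 0 ≤ Real.log y := by rw [hlogy]; nlinarith
  have hysq : y * y = u ^ (-(1/2) : ℝ) := by
    rw [hy, ← Real.rpow_add h0]; norm_num
  have h2 : (Real.log u) ^ 2 = 16 * (Real.log y) ^ 2 := by rw [hlogy]; ring
  rw [h2, ← hysq]
  nlinarith [sq_nonneg (Real.log y)]

lemma il_log_sq : IntervalIntegrable (fun u : ℝ => (Real.log u) ^ 2) volume 0 1 := by
  rw [intervalIntegrable_iff_integrableOn_Ioc_of_le (by norm_num)]
  have hmaj : IntegrableOn (fun u : ℝ => 16 * u ^ (-(1/2) : ℝ)) (Ioc 0 1) := by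
    have h := (intervalIntegrable_rpow' (a := 0) (b := 1)
      (by norm_num : (-1 : ℝ) < -(1/2))).const_mul 16
    rwa [intervalIntegrable_iff_integrableOn_Ioc_of_le (by norm_num)] at h
  refine hmaj.integrable.mono ?_ ?_
  · exact (Real.measurable_log.pow_const 2).aestronglyMeasurable
  · rw [ae_restrict_iff' measurableSet_Ioc]
    refine ae_of_all _ fun x hx => ?_
    have h1 := log_sq_le_rpow hx.1 hx.2
    have h2 : (0:ℝ) ≤ 16 * x ^ (-(1/2) : ℝ) := by
      have := Real.rpow_nonneg hx.1.le (-(1/2) : ℝ); linarith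
    rw [Real.norm_eq_abs, Real.norm_eq_abs, abs_of_nonneg (sq_nonneg _), abs_of_nonneg h2]
    exact h1

lemma il_pow_log_sq (k : ℕ) :
    IntervalIntegrable (fun u : ℝ => u ^ k * (Real.log u) ^ 2) volume 0 1 := by
  rw [intervalIntegrable_iff_integrableOn_Ioc_of_le (by norm_num)]
  refine ((intervalIntegrable_iff_integrableOn_Ioc_of_le (by norm_num)).mp
    il_log_sq).integrable.mono ?_ ?_
  · exact ((measurable_id.pow_const k).mul (Real.measurable_log.pow_const 2)).aestronglyMeasurable
  · rw [ae_restrict_iff' measurableSet_Ioc]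
    refine ae_of_all _ fun x hx => ?_
    rw [Real.norm_eq_abs, Real.norm_eq_abs, abs_mul]
    have h1 : |x ^ k| ≤ 1 := by
      rw [abs_of_nonneg (pow_nonneg hx.1.le k)]
      exact pow_le_one₀ hx.1.le hx.2
    have h2 : |(Real.log x) ^ 2| = (Real.log x)^2 := abs_of_nonneg (sq_nonneg _)
    nlinarith [sq_nonneg (Real.log x), abs_nonneg (x ^ k)]

lemma tendsto_pow_log (m : ℕ) :
    Tendsto (fun u : ℝ => u ^ (m + 1) * Real.log u) (𝓝[>] 0) (𝓝 0) := by
  have h1 := tendsto_log_mul_rpow_nhdsGT_zero (one_pos)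
  have h2 : Tendsto (fun u : ℝ => u ^ m) (𝓝[>] 0) (𝓝 (0 ^ m)) :=
    ((continuous_pow m).tendsto 0).mono_left nhdsWithin_le_nhds
  have h3 := h1.mul h2
  rw [zero_mul] at h3
  refine h3.congr' ?_
  filter_upwards [self_mem_nhdsWithin] with u (hu : (0:ℝ) < u)
  rw [Real.rpow_one]; ring

lemma tendsto_pow_log_sq (m : ℕ) :
    Tendsto (fun u : ℝ => u ^ (m + 1) * (Real.log u) ^ 2) (𝓝[>] 0) (𝓝 0) := by
  have h1 := (tendsto_log_mul_rpow_nhdsGT_zero (by norm_num : (0:ℝ) < 1/2)).pow 2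
  have h2 : Tendsto (fun u : ℝ => u ^ m) (𝓝[>] 0) (𝓝 (0 ^ m)) :=
    ((continuous_pow m).tendsto 0).mono_left nhdsWithin_le_nhds
  have h3 := h1.mul h2
  rw [show ((0:ℝ)^2 * 0^m = 0) by ring] at h3
  refine h3.congr' ?_
  filter_upwards [self_mem_nhdsWithin] with u (hu : (0:ℝ) < u)
  have : (u ^ ((1:ℝ)/2)) ^ 2 = u := by
    rw [← Real.rpow_natCast (u ^ ((1:ℝ)/2)) 2, ← Real.rpow_mul hu.le]; norm_num
  rw [mul_pow, this]; ring

lemma integral_pow_mul_log_sq (k : ℕ) :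
    ∫ u in (0:ℝ)..1, u ^ k * (Real.log u) ^ 2 = 2 / ((k : ℝ) + 1) ^ 3 := by
  set c : ℝ := (k : ℝ) + 1 with hc
  have hcpos : (0:ℝ) < c := by positivity
  have hc0 : c ≠ 0 := hcpos.ne'
  set F : ℝ → ℝ := fun u =>
    u ^ (k+1) * (Real.log u) ^ 2 / c - u ^ (k+1) * Real.log u * (2 / c^2)
      + u ^ (k+1) * (2 / c^3) with hF
  have hF0 : F 0 = 0 := by simp [hF]
  have hF1 : F 1 = 2 / c ^ 3 := by simp [hF, Real.log_one]
  have key : ∫ u in (0:ℝ)..1, u ^ k * (Real.log u) ^ 2 = F 1 - F 0 := by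
    apply intervalIntegral.integral_eq_sub_of_hasDeriv_right_of_le (by norm_num)
    · intro x hx
      rcases eq_or_ne x 0 with rfl | hx0
      · have hlim : Tendsto F (𝓝[>] (0:ℝ)) (𝓝 0) := by
          have t1 := (tendsto_pow_log_sq k).div_const c
          have t2 := (tendsto_pow_log k).mul_const (2 / c^2)
          have t3 : Tendsto (fun u : ℝ => u ^ (k+1) * (2 / c^3)) (𝓝[>] 0)
              (𝓝 ((0:ℝ) ^ (k+1) * (2 / c^3))) :=
            (((continuous_pow (k+1)).tendsto 0).mono_left nhdsWithin_le_nhds).mul_const _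
          have h4 := (t1.sub t2).add t3
          have : (0:ℝ) / c - 0 * (2 / c^2) + (0:ℝ) ^ (k+1) * (2 / c^3) = 0 := by
            simp [zero_pow (Nat.succ_ne_zero k)]
          rw [this] at h4
          exact h4
        have hsub : Icc (0:ℝ) 1 ⊆ insert 0 (Ioi 0) := by
          intro z hz
          rcases eq_or_lt_of_le hz.1 with h | h
          · exact Or.inl h.symm
          · exact Or.inr h
        show Tendsto F (𝓝[Icc (0:ℝ) 1] 0) (𝓝 (F 0))
        rw [hF0]
        refine Tendsto.mono_left ?_ (nhdsWithin_mono 0 hsub)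
        rw [nhdsWithin_insert, tendsto_sup]
        exact ⟨by simpa [hF0] using tendsto_pure_nhds F 0, hlim⟩
      · have hl : ContinuousAt Real.log x := Real.continuousAt_log hx0
        have hp : ContinuousAt (fun u : ℝ => u ^ (k+1)) x := (continuous_pow (k+1)).continuousAt
        exact (((hp.mul (hl.pow 2)).div_const c).sub
          ((hp.mul hl).mul_const (2/c^2))).add (hp.mul_const (2/c^3)) |>.continuousWithinAt
    · intro x hx
      have hx0 : x ≠ 0 := ne_of_gt hx.1
      have L : HasDerivAt Real.log x⁻¹ x := Real.hasDerivAt_log hx0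
      have P : HasDerivAt (fun u : ℝ => u ^ (k+1)) (((k:ℝ)+1) * x ^ k) x := by
        simpa using hasDerivAt_pow (k+1) x
      have d1 := (P.mul (L.pow 2)).div_const c
      have d2 := (P.mul L).mul_const (2/c^2)
      have d3 := P.mul_const (2/c^3)
      have D := (d1.sub d2).add d3
      have hxk : x ^ (k+1) * x⁻¹ = x ^ k := by
        rw [pow_succ, mul_assoc, mul_inv_cancel₀ hx0, mul_one]
      have D' : HasDerivAt F (x ^ k * Real.log x ^ 2) x := by
        refine D.congr_deriv ?_
        norm_num
        rw [hxk, hc]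
        field_simp
        ring
      exact D'.hasDerivWithinAt
    · exact il_pow_log_sq k
  rw [key, hF1, hF0, sub_zero]
noncomputable def g1 (t : ℝ) : ℝ := (Real.log (1 - t)) ^ 2 / t
noncomputable def g2 (t : ℝ) : ℝ := (Real.log t) ^ 2 / (1 - t)

lemma sum3 : Summable (fun n : ℕ => 1 / ((n : ℝ) + 1) ^ 3) := by
  have h := (Real.summable_one_div_nat_pow (p := 3)).mpr (by norm_num)
  have h2 := (summable_nat_add_iff (f := fun n : ℕ => 1 / (n : ℝ) ^ 3) 1).mpr h
  refine h2.congr fun n => ?_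
  push_cast; ring

lemma integral_g2_eq : ∫ t in (0:ℝ)..1, g2 t = 2 * zetaR 3 := by
  have hInt : ∀ k : ℕ, IntegrableOn (fun t : ℝ => t ^ k * (Real.log t) ^ 2) (Ioc 0 1) volume :=
    fun k => (intervalIntegrable_iff_integrableOn_Ioc_of_le (by norm_num)).mp (il_pow_log_sq k)
  have hval : ∀ k : ℕ, ∫ t in Ioc (0:ℝ) 1, t ^ k * (Real.log t) ^ 2
      = 2 / ((k:ℝ) + 1) ^ 3 := by
    intro k
    rw [← intervalIntegral.integral_of_le (by norm_num : (0:ℝ) ≤ 1)]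
    exact integral_pow_mul_log_sq k
  have hnormval : ∀ k : ℕ, (∫ t in Ioc (0:ℝ) 1, ‖t ^ k * (Real.log t) ^ 2‖)
      = 2 / ((k:ℝ) + 1) ^ 3 := by
    intro k
    rw [← hval k]
    apply setIntegral_congr_fun measurableSet_Ioc
    intro x hx
    exact norm_of_nonneg (mul_nonneg (pow_nonneg hx.1.le k) (sq_nonneg _))
  have hsum : Summable fun k : ℕ => ∫ t in Ioc (0:ℝ) 1, ‖t ^ k * (Real.log t) ^ 2‖ := by
    refine ((sum3.mul_left 2).congr fun k => ?_).congr fun k => (hnormval k).symm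
    rw [mul_one_div]
  have key := MeasureTheory.integral_tsum_of_summable_integral_norm
    (F := fun (k : ℕ) (t : ℝ) => t ^ k * (Real.log t) ^ 2) (μ := volume.restrict (Ioc 0 1))
    hInt hsum
  have lhs : ∑' k : ℕ, ∫ t in Ioc (0:ℝ) 1, t ^ k * (Real.log t) ^ 2 = 2 * zetaR 3 := by
    rw [tsum_congr hval]
    rw [show (fun k : ℕ => 2 / ((k:ℝ)+1)^3) = fun k : ℕ => 2 * (1/((k:ℝ)+1)^3) from
      funext fun k => by rw [mul_one_div], tsum_mul_left]
    rfl
  have rhs : ∫ t in Ioc (0:ℝ) 1, (∑' k : ℕ, t ^ k * (Real.log t) ^ 2) = ∫ t in Ioc (0:ℝ) 1, g2 t := by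
    apply setIntegral_congr_fun measurableSet_Ioc
    intro t ht
    show (∑' k : ℕ, t ^ k * (Real.log t) ^ 2) = g2 t
    rcases eq_or_lt_of_le ht.2 with h1 | h1
    · simp [h1, g2, Real.log_one]
    · have hg : HasSum (fun k : ℕ => t ^ k * (Real.log t) ^ 2)
          ((1 - t)⁻¹ * (Real.log t) ^ 2) :=
        (hasSum_geometric_of_lt_one ht.1.le h1).mul_right _
      rw [hg.tsum_eq, g2, div_eq_mul_inv, mul_comm]
  rw [intervalIntegral.integral_of_le (by norm_num : (0:ℝ) ≤ 1), ← rhs, ← key, lhs]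

lemma g2_reflect (x : ℝ) : g2 (1 - x) = g1 x := by
  simp [g1, g2, sub_sub_cancel]

lemma integral_g1_eq : ∫ t in (0:ℝ)..1, g1 t = 2 * zetaR 3 := by
  rw [← integral_g2_eq]
  have h : ∫ x in (0:ℝ)..1, g2 (1 - x) = ∫ x in (1-1:ℝ)..(1-0:ℝ), g2 x :=
    intervalIntegral.integral_comp_sub_left g2 1
  simp only [g2_reflect] at h
  rw [h]
  norm_num

lemma ii_g2_half : IntervalIntegrable g2 volume 0 (1/2) := by
  rw [intervalIntegrable_iff_integrableOn_Ioc_of_le (by norm_num)]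
  have hmaj : IntegrableOn (fun t : ℝ => 2 * (Real.log t) ^ 2) (Ioc 0 (1/2)) volume := by
    have h := (il_log_sq.mono_set (by
      rw [uIcc_of_le (by norm_num : (0:ℝ) ≤ 1/2), uIcc_of_le (by norm_num : (0:ℝ) ≤ 1)]
      exact Icc_subset_Icc le_rfl (by norm_num))).const_mul 2
    rwa [intervalIntegrable_iff_integrableOn_Ioc_of_le (by norm_num)] at h
  refine hmaj.integrable.mono ?_ ?_
  · exact ((Real.measurable_log.pow_const 2).div (measurable_const.sub measurable_id)).aestronglyMeasurable
  · rw [ae_restrict_iff' measurableSet_Ioc]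
    refine ae_of_all _ fun x hx => ?_
    have h1 : (0:ℝ) < 1 - x := by linarith [hx.2]
    have h2 : 1 - x ≥ 1/2 := by linarith [hx.2]
    have h3 : g2 x ≤ 2 * (Real.log x) ^ 2 := by
      rw [g2, div_le_iff₀ h1]
      nlinarith [sq_nonneg (Real.log x)]
    have h4 : 0 ≤ g2 x := div_nonneg (sq_nonneg _) h1.le
    rw [Real.norm_eq_abs, Real.norm_eq_abs, abs_of_nonneg h4,
      abs_of_nonneg (by positivity : (0:ℝ) ≤ 2 * (Real.log x)^2)]
    exact h3
lemma g1_nonneg {x : ℝ} (hx : 0 < x) : 0 ≤ g1 x := div_nonneg (sq_nonneg _) hx.le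

lemma neg_log_le {x : ℝ} (h0 : 0 ≤ x) (h1 : x < 1) : -Real.log (1 - x) ≤ x / (1 - x) := by
  have hpos : 0 < 1 - x := by linarith
  have := Real.log_le_sub_one_of_pos (inv_pos.mpr hpos)
  rw [Real.log_inv] at this
  have hinv : (1 - x)⁻¹ - 1 = x / (1 - x) := by field_simp; ring
  linarith [hinv ▸ this]

lemma ii_g1_half : IntervalIntegrable g1 volume 0 (1/2) := by
  rw [intervalIntegrable_iff_integrableOn_Ioc_of_le (by norm_num)]
  apply Measure.integrableOn_of_bounded (M := 2) (by simp)
  · exact ((Real.measurable_log.comp (measurable_const.sub measurable_id)).pow_const 2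
      |>.div measurable_id).aestronglyMeasurable
  · rw [ae_restrict_iff' measurableSet_Ioc]
    refine ae_of_all _ fun x hx => ?_
    have hx1 : x ≤ 1/2 := hx.2
    have h0 : 0 < x := hx.1
    have hpos : (0:ℝ) < 1 - x := by linarith
    have hl : -Real.log (1 - x) ≤ x / (1 - x) := neg_log_le h0.le (by linarith)
    have hl2 : x / (1 - x) ≤ 2 * x := by
      rw [div_le_iff₀ hpos]; nlinarith
    have hln : -Real.log (1 - x) ≤ 2 * x := le_trans hl hl2
    have hln0 : 0 ≤ -Real.log (1 - x) := by
      have := Real.log_nonpos hpos.le (by linarith)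
      linarith
    have hsq : (Real.log (1 - x)) ^ 2 ≤ 4 * x ^ 2 := by nlinarith
    have : g1 x ≤ 2 := by
      rw [g1, div_le_iff₀ h0]; nlinarith
    rw [Real.norm_eq_abs, abs_of_nonneg (g1_nonneg h0)]
    exact this

lemma ii_g1_right : IntervalIntegrable g1 volume (1/2) 1 := by
  have h := ii_g2_half.comp_sub_left 1
  norm_num at h
  have he : (fun x => g2 (1 - x)) = g1 := funext fun x => g2_reflect x
  rw [he] at h
  exact h.symm

lemma R_eq_Q : ∫ t in (1/2:ℝ)..1, g1 t = ∫ t in (0:ℝ)..(1/2), g2 t := by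
  have h : ∫ x in (1/2:ℝ)..1, g2 (1 - x) = ∫ x in (1-1:ℝ)..(1-1/2:ℝ), g2 x :=
    intervalIntegral.integral_comp_sub_left g2 1
  simp only [g2_reflect] at h
  rw [h]
  norm_num

lemma P_add_Q :
    (∫ t in (0:ℝ)..(1/2), g1 t) + ∫ t in (0:ℝ)..(1/2), g2 t = 2 * zetaR 3 := by
  rw [← R_eq_Q, intervalIntegral.integral_add_adjacent_intervals ii_g1_half ii_g1_right]
  exact integral_g1_eq
noncomputable def g3 (u : ℝ) : ℝ := (Real.log u) ^ 2 / (1 + u)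

lemma hz3 : HasSum (fun n : ℕ => 1 / ((n:ℝ) + 1) ^ 3) (zetaR 3) := by
  have := sum3.hasSum
  rwa [show ∑' n : ℕ, 1 / ((n:ℝ)+1)^3 = zetaR 3 from rfl] at this

lemma odd3 : HasSum (fun j : ℕ => 1 / (((2*j+1 : ℕ) : ℝ) + 1) ^ 3) (1/8 * zetaR 3) := by
  have h := hz3.mul_left (1/8)
  have he : (fun j : ℕ => (1:ℝ)/8 * (1/((j:ℝ)+1)^3))
      = fun j : ℕ => 1 / (((2*j+1 : ℕ) : ℝ) + 1) ^ 3 := by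
    funext j
    have hc : (((2*j+1 : ℕ) : ℝ) + 1) ^ 3 = 8 * ((j:ℝ)+1)^3 := by push_cast; ring
    rw [hc, div_mul_div_comm]
    norm_num
  rwa [he] at h

lemma even3 : HasSum (fun j : ℕ => 1 / (((2*j : ℕ) : ℝ) + 1) ^ 3) (7/8 * zetaR 3) := by
  have hinj : Function.Injective (fun j : ℕ => 2 * j) :=
    fun a b h => mul_left_cancel₀ two_ne_zero h
  have hsumm : Summable (fun j : ℕ => 1 / (((2*j : ℕ) : ℝ) + 1) ^ 3) :=
    sum3.comp_injective hinj
  have htot : HasSum (fun n : ℕ => 1 / ((n:ℝ) + 1) ^ 3)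
      ((∑' j : ℕ, 1 / (((2*j : ℕ) : ℝ) + 1) ^ 3) + 1/8 * zetaR 3) :=
    HasSum.even_add_odd (f := fun n : ℕ => 1 / ((n:ℝ) + 1) ^ 3) hsumm.hasSum odd3
  have huniq := htot.unique hz3
  have hE : ∑' j : ℕ, 1 / (((2*j : ℕ) : ℝ) + 1) ^ 3 = 7/8 * zetaR 3 := by linarith
  have hh := hsumm.hasSum
  rwa [hE] at hh

lemma alt_sum_eq :
    ∑' k : ℕ, (-1:ℝ)^k * (2 / ((k:ℝ)+1)^3) = 3/2 * zetaR 3 := by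
  have he : HasSum (fun j : ℕ => (-1:ℝ)^(2*j) * (2 / (((2*j : ℕ):ℝ)+1)^3))
      (2 * (7/8 * zetaR 3)) := by
    have h := even3.mul_left 2
    have heq : (fun j : ℕ => (2:ℝ) * (1 / (((2*j : ℕ):ℝ)+1)^3))
        = fun j : ℕ => (-1:ℝ)^(2*j) * (2 / (((2*j : ℕ):ℝ)+1)^3) := by
      funext j
      have hpow : (-1:ℝ)^(2*j) = 1 := by rw [pow_mul]; norm_num
      rw [hpow, one_mul, mul_one_div]
    rwa [heq] at h
  have ho : HasSum (fun j : ℕ => (-1:ℝ)^(2*j+1) * (2 / (((2*j+1 : ℕ):ℝ)+1)^3))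
      ((-2) * (1/8 * zetaR 3)) := by
    have h := odd3.mul_left (-2)
    have heq : (fun j : ℕ => (-2:ℝ) * (1 / (((2*j+1 : ℕ):ℝ)+1)^3))
        = fun j : ℕ => (-1:ℝ)^(2*j+1) * (2 / (((2*j+1 : ℕ):ℝ)+1)^3) := by
      funext j
      have hpow : (-1:ℝ)^(2*j+1) = -1 := by rw [pow_succ, pow_mul]; norm_num
      rw [hpow]; ring
    rwa [heq] at h
  have htot := HasSum.even_add_odd (f := fun k : ℕ => (-1:ℝ)^k * (2 / ((k:ℝ)+1)^3)) he ho
  rw [htot.tsum_eq]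
  ring

lemma integral_g3_eq : ∫ t in (0:ℝ)..1, g3 t = 3/2 * zetaR 3 := by
  have hInt : ∀ k : ℕ, IntegrableOn (fun t : ℝ => (-1:ℝ)^k * (t ^ k * (Real.log t) ^ 2))
      (Ioc 0 1) volume := fun k =>
    ((intervalIntegrable_iff_integrableOn_Ioc_of_le (by norm_num)).mp
      (il_pow_log_sq k)).const_mul _
  have hval : ∀ k : ℕ, ∫ t in Ioc (0:ℝ) 1, (-1:ℝ)^k * (t ^ k * (Real.log t) ^ 2)
      = (-1:ℝ)^k * (2 / ((k:ℝ) + 1) ^ 3) := by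
    intro k
    rw [MeasureTheory.integral_const_mul, ← intervalIntegral.integral_of_le
      (by norm_num : (0:ℝ) ≤ 1), integral_pow_mul_log_sq k]
  have hnormval : ∀ k : ℕ, (∫ t in Ioc (0:ℝ) 1, ‖(-1:ℝ)^k * (t ^ k * (Real.log t) ^ 2)‖)
      = 2 / ((k:ℝ) + 1) ^ 3 := by
    intro k
    have h : ∀ t ∈ Ioc (0:ℝ) 1, ‖(-1:ℝ)^k * (t ^ k * (Real.log t) ^ 2)‖
        = t ^ k * (Real.log t) ^ 2 := by
      intro t ht
      rw [norm_mul, norm_pow, norm_neg, norm_one, one_pow, one_mul]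
      exact norm_of_nonneg (mul_nonneg (pow_nonneg ht.1.le k) (sq_nonneg _))
    rw [setIntegral_congr_fun measurableSet_Ioc h,
      ← intervalIntegral.integral_of_le (by norm_num : (0:ℝ) ≤ 1), integral_pow_mul_log_sq k]
  have hsum : Summable fun k : ℕ => ∫ t in Ioc (0:ℝ) 1, ‖(-1:ℝ)^k * (t ^ k * (Real.log t) ^ 2)‖ := by
    refine ((sum3.mul_left 2).congr fun k => ?_).congr fun k => (hnormval k).symm
    rw [mul_one_div]
  have key := MeasureTheory.integral_tsum_of_summable_integral_norm
    (F := fun (k : ℕ) (t : ℝ) => (-1:ℝ)^k * (t ^ k * (Real.log t) ^ 2))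
    (μ := volume.restrict (Ioc 0 1)) hInt hsum
  have lhs : ∑' k : ℕ, ∫ t in Ioc (0:ℝ) 1, (-1:ℝ)^k * (t ^ k * (Real.log t) ^ 2)
      = 3/2 * zetaR 3 := by
    rw [tsum_congr hval, alt_sum_eq]
  have rhs : ∫ t in Ioc (0:ℝ) 1, (∑' k : ℕ, (-1:ℝ)^k * (t ^ k * (Real.log t) ^ 2))
      = ∫ t in Ioc (0:ℝ) 1, g3 t := by
    apply setIntegral_congr_fun measurableSet_Ioc
    intro t ht
    show (∑' k : ℕ, (-1:ℝ)^k * (t ^ k * (Real.log t) ^ 2)) = g3 t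
    rcases eq_or_lt_of_le ht.2 with h1 | h1
    · simp [h1, g3, Real.log_one]
    · have hg : HasSum (fun k : ℕ => (-t) ^ k * (Real.log t) ^ 2)
          ((1 - (-t))⁻¹ * (Real.log t) ^ 2) := by
        refine (hasSum_geometric_of_norm_lt_one (ξ := -t) ?_).mul_right _
        rw [norm_neg, Real.norm_eq_abs, abs_of_pos ht.1]
        exact h1
      have heq : (fun k : ℕ => (-t) ^ k * (Real.log t) ^ 2)
          = fun k : ℕ => (-1:ℝ)^k * (t ^ k * (Real.log t) ^ 2) := by
        funext k
        rw [neg_pow]; ring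
      rw [heq, sub_neg_eq_add] at hg
      rw [hg.tsum_eq, g3, div_eq_mul_inv, mul_comm]
  rw [intervalIntegral.integral_of_le (by norm_num : (0:ℝ) ≤ 1), ← rhs, ← key, lhs]
noncomputable def g4 (u : ℝ) : ℝ := (Real.log (1 + u)) ^ 2 / (1 + u)
noncomputable def g5 (u : ℝ) : ℝ := Real.log u * Real.log (1 + u) / (1 + u)
noncomputable def g6 (u : ℝ) : ℝ := (Real.log (1 + u)) ^ 2 / (2 * u)

lemma cwa_zero {F : ℝ → ℝ} {b : ℝ} (h : Tendsto F (𝓝[>] 0) (𝓝 0)) (h0 : F 0 = 0) :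
    ContinuousWithinAt F (Icc 0 b) 0 := by
  have hsub : Icc (0:ℝ) b ⊆ insert 0 (Ioi 0) := fun z hz => by
    rcases eq_or_lt_of_le hz.1 with h' | h'
    · exact Or.inl h'.symm
    · exact Or.inr h'
  show Tendsto F (𝓝[Icc (0:ℝ) b] 0) (𝓝 (F 0))
  rw [h0]
  refine Tendsto.mono_left ?_ (nhdsWithin_mono 0 hsub)
  rw [nhdsWithin_insert, tendsto_sup]
  exact ⟨by simpa [h0] using tendsto_pure_nhds F 0, h⟩

lemma log1p_nonneg {u : ℝ} (hu : 0 ≤ u) : 0 ≤ Real.log (1 + u) :=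
  Real.log_nonneg (by linarith)

lemma log1p_le {u : ℝ} (hu : 0 ≤ u) : Real.log (1 + u) ≤ u := by
  have := Real.log_le_sub_one_of_pos (by linarith : (0:ℝ) < 1 + u)
  linarith

lemma cont_log1p_sq : ContinuousOn (fun u : ℝ => (Real.log (1 + u)) ^ 2) (Icc 0 1) := by
  apply ContinuousOn.pow
  apply ContinuousOn.log
  · exact (continuous_const.add continuous_id).continuousOn
  · intro x hx
    have := hx.1
    nlinarith [hx.1]

lemma ii_g4 : IntervalIntegrable g4 volume 0 1 := by
  apply ContinuousOn.intervalIntegrable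
  rw [uIcc_of_le (by norm_num : (0:ℝ) ≤ 1)]
  exact cont_log1p_sq.div ((continuous_const.add continuous_id).continuousOn)
    (fun x hx => by nlinarith [hx.1])

lemma ii_g5 : IntervalIntegrable g5 volume 0 1 := by
  rw [intervalIntegrable_iff_integrableOn_Ioc_of_le (by norm_num)]
  have hmaj : IntegrableOn (fun u : ℝ => 1 + (Real.log u) ^ 2) (Ioc 0 1) volume := by
    have h := (intervalIntegrable_const (μ := volume) (a := (0:ℝ)) (b := 1) (c := (1:ℝ))).add il_log_sq
    rwa [intervalIntegrable_iff_integrableOn_Ioc_of_le (by norm_num)] at h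
  refine hmaj.integrable.mono ?_ ?_
  · exact ((Real.measurable_log.mul (Real.measurable_log.comp
      (measurable_const.add measurable_id))).div
      (measurable_const.add measurable_id)).aestronglyMeasurable
  · rw [ae_restrict_iff' measurableSet_Ioc]
    refine ae_of_all _ fun x hx => ?_
    have h0 : 0 < x := hx.1
    have h1 : (1:ℝ) ≤ 1 + x := by linarith
    have hl0 : 0 ≤ Real.log (1 + x) := log1p_nonneg h0.le
    have hl1 : Real.log (1 + x) ≤ x := log1p_le h0.le
    have hx1 : x ≤ 1 := hx.2
    have hfrac : Real.log (1 + x) / (1 + x) ≤ 1 := by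
      rw [div_le_one (by linarith)]; linarith
    have hfrac0 : 0 ≤ Real.log (1 + x) / (1 + x) := div_nonneg hl0 (by linarith)
    have habs : ‖g5 x‖ = |Real.log x| * (Real.log (1 + x) / (1 + x)) := by
      rw [g5, Real.norm_eq_abs, mul_div_assoc, abs_mul, abs_of_nonneg hfrac0]
    rw [habs, Real.norm_eq_abs]
    have h2 : |Real.log x| * (Real.log (1 + x) / (1 + x)) ≤ |Real.log x| :=
      mul_le_of_le_one_right (abs_nonneg _) hfrac
    have h3 : |Real.log x| ≤ 1 + (Real.log x) ^ 2 := by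
      nlinarith [sq_nonneg (|Real.log x| - 1), sq_abs (Real.log x)]
    have h4 : (0:ℝ) ≤ 1 + (Real.log x) ^ 2 := by positivity
    rw [abs_of_nonneg h4]
    linarith

lemma ii_g6 : IntervalIntegrable g6 volume 0 1 := by
  rw [intervalIntegrable_iff_integrableOn_Ioc_of_le (by norm_num)]
  apply Measure.integrableOn_of_bounded (M := 1) (by simp)
  · exact (((Real.measurable_log.comp (measurable_const.add measurable_id)).pow_const 2).div
      (measurable_const.mul measurable_id)).aestronglyMeasurable
  · rw [ae_restrict_iff' measurableSet_Ioc]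
    refine ae_of_all _ fun x hx => ?_
    have h0 : 0 < x := hx.1
    have hl0 : 0 ≤ Real.log (1 + x) := log1p_nonneg h0.le
    have hl1 : Real.log (1 + x) ≤ x := log1p_le h0.le
    have hg : g6 x ≤ x / 2 := by
      rw [g6, div_le_iff₀ (by linarith)]
      nlinarith
    have hg0 : 0 ≤ g6 x := div_nonneg (sq_nonneg _) (by linarith)
    rw [Real.norm_eq_abs, abs_of_nonneg hg0]
    linarith [hx.2]

lemma integral_g4_eq : ∫ u in (0:ℝ)..1, g4 u = (Real.log 2) ^ 3 / 3 := by
  have h : ∀ x ∈ uIcc (0:ℝ) 1, HasDerivAt (fun u : ℝ => (Real.log (1 + u)) ^ 3 / 3) (g4 x) x := by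
    intro x hx
    rw [uIcc_of_le (by norm_num : (0:ℝ) ≤ 1)] at hx
    have h1 : (0:ℝ) < 1 + x := by linarith [hx.1]
    have L : HasDerivAt (fun u : ℝ => Real.log (1 + u)) (1 / (1 + x)) x := by
      have h2 := ((hasDerivAt_id x).const_add 1).log h1.ne'
      simpa using h2
    have h3 := (L.pow 3).div_const 3
    refine h3.congr_deriv ?_
    rw [g4]
    field_simp
    ring
  rw [intervalIntegral.integral_eq_sub_of_hasDerivAt h ii_g4]
  norm_num

lemma integral_g6_g5 : (∫ u in (0:ℝ)..1, (g6 u + g5 u)) = 0 := by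
  set F : ℝ → ℝ := fun u => Real.log u * (Real.log (1 + u)) ^ 2 / 2 with hF
  have hF0 : F 0 = 0 := by simp [hF]
  have hF1 : F 1 = 0 := by norm_num [hF]
  have key : (∫ u in (0:ℝ)..1, (g6 u + g5 u)) = F 1 - F 0 := by
    apply intervalIntegral.integral_eq_sub_of_hasDeriv_right_of_le (by norm_num)
    · intro x hx
      rcases eq_or_ne x 0 with rfl | hx0
      · apply cwa_zero ?_ hF0
        have ta : Tendsto (fun u : ℝ => Real.log u * u) (𝓝[>] 0) (𝓝 0) := by
          have := tendsto_log_mul_rpow_nhdsGT_zero one_pos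
          refine this.congr' ?_
          filter_upwards [self_mem_nhdsWithin] with u _
          rw [Real.rpow_one]
        have tb : Tendsto g6 (𝓝[>] (0:ℝ)) (𝓝 0) := by
          apply squeeze_zero' (g := fun u : ℝ => u / 2)
          · filter_upwards [self_mem_nhdsWithin] with u (hu : (0:ℝ) < u)
            exact div_nonneg (sq_nonneg _) (by linarith)
          · filter_upwards [self_mem_nhdsWithin] with u (hu : (0:ℝ) < u)
            rw [g6, div_le_iff₀ (by linarith)]
            nlinarith [log1p_nonneg hu.le, log1p_le hu.le]
          · have : Tendsto (fun u : ℝ => u / 2) (𝓝[>] (0:ℝ)) (𝓝 (0 / 2)) :=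
              (tendsto_id.mono_left nhdsWithin_le_nhds).div_const 2
            simpa using this
        have := ta.mul tb
        rw [zero_mul] at this
        refine this.congr' ?_
        filter_upwards [self_mem_nhdsWithin] with u (hu : (0:ℝ) < u)
        rw [hF, g6]
        field_simp
      · have hxpos : 0 < x := lt_of_le_of_ne hx.1 (Ne.symm hx0)
        have h1 : (1 + x) ≠ 0 := by nlinarith
        have c1 : ContinuousAt Real.log x := Real.continuousAt_log hx0
        have c2 : ContinuousAt (fun u : ℝ => Real.log (1 + u)) x :=
          (Real.continuousAt_log h1).comp ((continuous_const.add continuous_id).continuousAt)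
        exact ((c1.mul (c2.pow 2)).div_const 2).continuousWithinAt
    · intro x hx
      have hx0 : x ≠ 0 := ne_of_gt hx.1
      have h1 : (0:ℝ) < 1 + x := by linarith [hx.1]
      have L1 : HasDerivAt Real.log x⁻¹ x := Real.hasDerivAt_log hx0
      have L2 : HasDerivAt (fun u : ℝ => Real.log (1 + u)) (1 / (1 + x)) x := by
        have h2 := ((hasDerivAt_id x).const_add 1).log h1.ne'
        simpa using h2
      have D := (L1.mul (L2.pow 2)).div_const 2
      have D' : HasDerivAt F (g6 x + g5 x) x := by
        refine D.congr_deriv ?_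
        simp only [Pi.pow_apply]
        rw [g6, g5]
        field_simp
        ring
      exact D'.hasDerivWithinAt
    · exact ii_g6.add ii_g5
  rw [key, hF0, hF1, sub_zero]
lemma ii_g3 : IntervalIntegrable g3 volume 0 1 := by
  rw [intervalIntegrable_iff_integrableOn_Ioc_of_le (by norm_num)]
  refine ((intervalIntegrable_iff_integrableOn_Ioc_of_le (by norm_num)).mp
    il_log_sq).integrable.mono ?_ ?_
  · exact ((Real.measurable_log.pow_const 2).div
      (measurable_const.add measurable_id)).aestronglyMeasurable
  · rw [ae_restrict_iff' measurableSet_Ioc]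
    refine ae_of_all _ fun x hx => ?_
    have h0 : 0 < x := hx.1
    have h1 : (1:ℝ) ≤ 1 + x := by linarith
    have hg0 : 0 ≤ g3 x := div_nonneg (sq_nonneg _) (by linarith)
    have hg : g3 x ≤ (Real.log x) ^ 2 := by
      rw [g3, div_le_iff₀ (by linarith)]
      nlinarith [sq_nonneg (Real.log x)]
    rw [Real.norm_eq_abs, Real.norm_eq_abs, abs_of_nonneg hg0, abs_of_nonneg (sq_nonneg _)]
    exact hg

lemma cv1 : ∫ t in (0:ℝ)..(1/2), g2 t = ∫ u in (0:ℝ)..1, (g3 u - 2 * g5 u + g4 u) := by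
  have himg : (fun u : ℝ => u / (1 + u)) '' (Ioo 0 1) = Ioo 0 (1/2) := by
    ext y
    constructor
    · rintro ⟨u, hu, rfl⟩
      have h1 : (0:ℝ) < 1 + u := by linarith [hu.1]
      refine ⟨div_pos hu.1 h1, ?_⟩
      rw [div_lt_iff₀ h1]
      nlinarith [hu.2]
    · intro hy
      have h1 : (0:ℝ) < 1 - y := by linarith [hy.2]
      refine ⟨y / (1 - y), ⟨div_pos hy.1 h1, ?_⟩, ?_⟩
      · rw [div_lt_one h1]; linarith [hy.2]
      · field_simp; ring
  have hderiv : ∀ x ∈ Ioo (0:ℝ) 1,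
      HasDerivWithinAt (fun u : ℝ => u / (1 + u)) (1 / (1 + x) ^ 2) (Ioo 0 1) x := by
    intro x hx
    have h1 : (1 + x) ≠ 0 := by nlinarith [hx.1]
    have h2 := (hasDerivAt_id x).div ((hasDerivAt_id x).const_add 1) h1
    simp only [id_eq] at h2
    have h3 : (1 * (1 + x) - x * 1) / (1 + x) ^ 2 = 1 / (1 + x) ^ 2 := by ring_nf
    rw [h3] at h2
    exact h2.hasDerivWithinAt
  have hinj : InjOn (fun u : ℝ => u / (1 + u)) (Ioo 0 1) := by
    intro a ha b hb h
    have h1 : (1 + a) ≠ 0 := by nlinarith [ha.1]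
    have h2 : (1 + b) ≠ 0 := by nlinarith [hb.1]
    field_simp at h
    nlinarith [h]
  have key := integral_image_eq_integral_abs_deriv_smul measurableSet_Ioo hderiv hinj g2
  rw [himg] at key
  rw [intervalIntegral.integral_of_le (by norm_num : (0:ℝ) ≤ 1/2), integral_Ioc_eq_integral_Ioo, key,
      intervalIntegral.integral_of_le (by norm_num : (0:ℝ) ≤ 1), integral_Ioc_eq_integral_Ioo]
  apply setIntegral_congr_fun measurableSet_Ioo
  intro u hu
  have h0 : 0 < u := hu.1
  have h1 : (0:ℝ) < 1 + u := by linarith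
  have hlog : Real.log (u / (1 + u)) = Real.log u - Real.log (1 + u) :=
    Real.log_div h0.ne' h1.ne'
  have hden : 1 - u / (1 + u) = 1 / (1 + u) := by field_simp; ring
  show |1 / (1 + u) ^ 2| • g2 (u / (1 + u)) = g3 u - 2 * g5 u + g4 u
  rw [smul_eq_mul, g2, hlog, hden, abs_of_pos (by positivity), g3, g5, g4]
  field_simp
  ring

lemma integral_logsq_one_sub :
    ∫ t in (0:ℝ)..(1/2), (Real.log (1 - t)) ^ 2 / (1 - t) = (Real.log 2) ^ 3 / 3 := by
  have h : ∀ x ∈ uIcc (0:ℝ) (1/2),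
      HasDerivAt (fun t : ℝ => -(Real.log (1 - t)) ^ 3 / 3)
        ((Real.log (1 - x)) ^ 2 / (1 - x)) x := by
    intro x hx
    rw [uIcc_of_le (by norm_num : (0:ℝ) ≤ 1/2)] at hx
    have h1 : (0:ℝ) < 1 - x := by linarith [hx.2]
    have L : HasDerivAt (fun t : ℝ => Real.log (1 - t)) (-(1 / (1 - x))) x := by
      have h2 : HasDerivAt (fun t : ℝ => 1 - t) (-1) x := by
        simpa using (hasDerivAt_id x).const_sub 1
      have h3 := h2.log h1.ne'
      rw [show (-1) / (1 - x) = -(1 / (1 - x)) by ring] at h3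
      exact h3
    have h4 := ((L.pow 3).div_const 3).neg
    have h5 : -(3 * Real.log (1 - x) ^ 2 * -(1 / (1 - x)) / 3)
        = (Real.log (1 - x)) ^ 2 / (1 - x) := by field_simp
    rw [show (fun t : ℝ => -(Real.log (1 - t)) ^ 3 / 3)
        = fun t : ℝ => -((Real.log (1 - t)) ^ 3 / 3) from funext fun t => by ring]
    rw [show (3 : ℕ) - 1 = 2 from rfl] at h4
    rw [← h5]
    exact h4
  have hii : IntervalIntegrable (fun t : ℝ => (Real.log (1 - t)) ^ 2 / (1 - t)) volume 0 (1/2) := by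
    apply ContinuousOn.intervalIntegrable
    rw [uIcc_of_le (by norm_num : (0:ℝ) ≤ 1/2)]
    have hc : ContinuousOn (fun t : ℝ => Real.log (1 - t)) (Icc 0 (1/2)) := by
      apply ContinuousOn.log
      · exact (continuous_const.sub continuous_id).continuousOn
      · intro x hx; have := hx.2; intro hcon; rw [sub_eq_zero] at hcon; linarith
    exact (hc.pow 2).div ((continuous_const.sub continuous_id).continuousOn)
      (fun x hx => by have := hx.2; intro hcon; rw [sub_eq_zero] at hcon; linarith)
  rw [intervalIntegral.integral_eq_sub_of_hasDerivAt h hii]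
  norm_num
  rw [one_div, Real.log_inv]
  ring

lemma cv2 : ∫ u in (0:ℝ)..1, g6 u
    = 1/2 * (∫ t in (0:ℝ)..(1/2), g1 t) + (Real.log 2) ^ 3 / 6 := by
  have himg : (fun t : ℝ => t / (1 - t)) '' (Ioo 0 (1/2)) = Ioo 0 1 := by
    ext y
    constructor
    · rintro ⟨t, ht, rfl⟩
      have h1 : (0:ℝ) < 1 - t := by linarith [ht.2]
      refine ⟨div_pos ht.1 h1, ?_⟩
      rw [div_lt_one h1]
      linarith [ht.2]
    · intro hy
      have h1 : (0:ℝ) < 1 + y := by linarith [hy.1]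
      refine ⟨y / (1 + y), ⟨div_pos hy.1 h1, ?_⟩, ?_⟩
      · rw [div_lt_iff₀ h1]; nlinarith [hy.2]
      · field_simp; ring
  have hderiv : ∀ x ∈ Ioo (0:ℝ) (1/2),
      HasDerivWithinAt (fun t : ℝ => t / (1 - t)) (1 / (1 - x) ^ 2) (Ioo 0 (1/2)) x := by
    intro x hx
    have h1 : (1 - x) ≠ 0 := by
      have := hx.2; intro hcon; rw [sub_eq_zero] at hcon; linarith
    have h2 := (hasDerivAt_id x).div ((hasDerivAt_id x).const_sub 1) h1
    simp only [id_eq] at h2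
    have h3 : (1 * (1 - x) - x * (-1)) / (1 - x) ^ 2 = 1 / (1 - x) ^ 2 := by ring_nf
    rw [h3] at h2
    exact h2.hasDerivWithinAt
  have hinj : InjOn (fun t : ℝ => t / (1 - t)) (Ioo 0 (1/2)) := by
    intro a ha b hb h
    have h1 : (1 - a) ≠ 0 := by
      have := ha.2; intro hcon; rw [sub_eq_zero] at hcon; linarith
    have h2 : (1 - b) ≠ 0 := by
      have := hb.2; intro hcon; rw [sub_eq_zero] at hcon; linarith
    field_simp at h
    nlinarith [h]
  have key := integral_image_eq_integral_abs_deriv_smul measurableSet_Ioo hderiv hinj g6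
  rw [himg] at key
  have hptwise : ∀ t ∈ Ioo (0:ℝ) (1/2),
      |1 / (1 - t) ^ 2| • g6 (t / (1 - t))
        = 1/2 * g1 t + 1/2 * ((Real.log (1 - t)) ^ 2 / (1 - t)) := by
    intro t ht
    have h0 : 0 < t := ht.1
    have h1 : (0:ℝ) < 1 - t := by linarith [ht.2]
    have hplus : 1 + t / (1 - t) = 1 / (1 - t) := by field_simp; ring
    have hlog : Real.log (1 + t / (1 - t)) = -Real.log (1 - t) := by
      rw [hplus, one_div, Real.log_inv]
    rw [smul_eq_mul, g6, hlog, abs_of_pos (by positivity), g1]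
    field_simp
    ring
  rw [intervalIntegral.integral_of_le (by norm_num : (0:ℝ) ≤ 1), integral_Ioc_eq_integral_Ioo, key,
      setIntegral_congr_fun measurableSet_Ioo hptwise,
      ← integral_Ioc_eq_integral_Ioo,
      ← intervalIntegral.integral_of_le (by norm_num : (0:ℝ) ≤ 1/2)]
  have hii1 : IntervalIntegrable (fun t : ℝ => 1/2 * g1 t) volume 0 (1/2) :=
    ii_g1_half.const_mul _
  have hii2 : IntervalIntegrable (fun t : ℝ => 1/2 * ((Real.log (1 - t)) ^ 2 / (1 - t)))
      volume 0 (1/2) := by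
    apply IntervalIntegrable.const_mul
    apply ContinuousOn.intervalIntegrable
    rw [uIcc_of_le (by norm_num : (0:ℝ) ≤ 1/2)]
    have hc : ContinuousOn (fun t : ℝ => Real.log (1 - t)) (Icc 0 (1/2)) := by
      apply ContinuousOn.log
      · exact (continuous_const.sub continuous_id).continuousOn
      · intro x hx; have := hx.2; intro hcon; rw [sub_eq_zero] at hcon; linarith
    exact (hc.pow 2).div ((continuous_const.sub continuous_id).continuousOn)
      (fun x hx => by have := hx.2; intro hcon; rw [sub_eq_zero] at hcon; linarith)
  rw [intervalIntegral.integral_add hii1 hii2, intervalIntegral.integral_const_mul,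
    intervalIntegral.integral_const_mul, integral_logsq_one_sub]
  ring

lemma Q_val : ∫ t in (0:ℝ)..(1/2), g2 t
    = 3/2 * zetaR 3 + (∫ t in (0:ℝ)..(1/2), g1 t) + 2/3 * (Real.log 2) ^ 3 := by
  have hsplit : ∫ u in (0:ℝ)..1, (g3 u - 2 * g5 u + g4 u)
      = (∫ u in (0:ℝ)..1, g3 u) - 2 * (∫ u in (0:ℝ)..1, g5 u) + ∫ u in (0:ℝ)..1, g4 u := by
    rw [intervalIntegral.integral_add (ii_g3.sub (ii_g5.const_mul 2)) ii_g4,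
      intervalIntegral.integral_sub ii_g3 (ii_g5.const_mul 2),
      intervalIntegral.integral_const_mul]
  have hg5 : (∫ u in (0:ℝ)..1, g5 u) = -(∫ u in (0:ℝ)..1, g6 u) := by
    have h := integral_g6_g5
    rw [intervalIntegral.integral_add ii_g6 ii_g5] at h
    linarith
  rw [cv1, hsplit, integral_g3_eq, integral_g4_eq, hg5, cv2]
  ring

lemma P_val : ∫ t in (0:ℝ)..(1/2), g1 t = 1/4 * zetaR 3 - 1/3 * (Real.log 2) ^ 3 := by
  have h1 := P_add_Q
  have h2 := Q_val
  linarith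

lemma psi_hasSum {t : ℝ} (h0 : 0 < t) (h1 : t < 1) :
    HasSum (fun n : ℕ => 2 * harm (n + 1) / ((n : ℝ) + 2) * t ^ (n + 1)) (g1 t) := by
  have h := (sq_log_hasSum h0.le h1).div_const t
  have he : (fun n : ℕ => 2 * harm (n + 1) / ((n : ℝ) + 2) * t ^ (n + 2) / t)
      = fun n : ℕ => 2 * harm (n + 1) / ((n : ℝ) + 2) * t ^ (n + 1) := by
    funext n
    rw [pow_succ, ← mul_assoc, mul_div_assoc, div_self h0.ne', mul_one]
  rw [he] at h
  exact h

lemma harm_sum_eq (n : ℕ) : (∑ m ∈ Finset.Ico 1 (n + 1), 1 / (m : ℝ)) = harm n := by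
  rw [harm, Finset.sum_Ico_eq_sum_range]
  simp only [Nat.add_sub_cancel]
  refine Finset.sum_congr rfl fun i _ => ?_
  push_cast
  rw [add_comm]

lemma lhs_eq_half_P :
    (∑' n : ℕ, (1 / 2 : ℝ) ^ (n + 1) / ((n : ℝ) + 1) ^ 2 *
        ∑ m ∈ Finset.Ico 1 (n + 1), 1 / (m : ℝ))
      = 1/2 * ∫ t in (0:ℝ)..(1/2), g1 t := by
  set b : ℕ → ℝ := fun n => (1/2:ℝ)^(n+1) / ((n:ℝ)+1)^2 * harm n with hb
  have hb0 : b 0 = 0 := by simp [hb, harm]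
  have hbnn : ∀ n, 0 ≤ b n := fun n => by
    apply mul_nonneg _ (harm_nonneg n)
    positivity
  have hble : ∀ n, b n ≤ (1/2:ℝ)^(n+1) := by
    intro n
    show (1/2:ℝ)^(n+1) / ((n:ℝ)+1)^2 * harm n ≤ (1/2:ℝ)^(n+1)
    have h1 : harm n ≤ ((n:ℝ)+1)^2 := by
      calc harm n ≤ n := harm_le n
        _ ≤ ((n:ℝ)+1)^2 := by nlinarith [Nat.cast_nonneg (α := ℝ) n]
    have h2 : (0:ℝ) < ((n:ℝ)+1)^2 := by positivity
    rw [div_mul_eq_mul_div, div_le_iff₀ h2]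
    have h3 : (0:ℝ) ≤ (1/2:ℝ)^(n+1) := by positivity
    nlinarith [mul_le_mul_of_nonneg_left h1 h3]
  have hgeo : Summable (fun n : ℕ => (1/2:ℝ)^(n+1)) := by
    have := (summable_geometric_of_lt_one (by norm_num : (0:ℝ) ≤ 1/2) (by norm_num)).mul_left (1/2)
    refine this.congr fun n => ?_
    rw [pow_succ, mul_comm]
  have hbs : Summable b := Summable.of_nonneg_of_le hbnn hble hgeo
  have hψInt : ∀ n : ℕ, IntegrableOn
      (fun t : ℝ => 2 * harm (n + 1) / ((n : ℝ) + 2) * t ^ (n + 1)) (Ioc 0 (1/2)) volume :=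
    fun n => (Continuous.integrableOn_Ioc (by continuity))
  have hψval : ∀ n : ℕ, ∫ t in Ioc (0:ℝ) (1/2), 2 * harm (n + 1) / ((n : ℝ) + 2) * t ^ (n + 1)
      = 2 * b (n + 1) := by
    intro n
    rw [← intervalIntegral.integral_of_le (by norm_num : (0:ℝ) ≤ 1/2),
      intervalIntegral.integral_const_mul, integral_pow]
    show 2 * harm (n + 1) / ((n:ℝ) + 2) * (((1/2:ℝ)^(n+1+1) - 0^(n+1+1))/(((n+1:ℕ):ℝ)+1))
      = 2 * ((1/2:ℝ)^(n+1+1) / (((n+1:ℕ):ℝ)+1)^2 * harm (n+1))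
    push_cast
    rw [zero_pow (by omega : n + 1 + 1 ≠ 0), sub_zero]
    have hne : ((n:ℝ)+2) ≠ 0 := by positivity
    field_simp
    ring_nf
  have hψnorm : ∀ n : ℕ, (∫ t in Ioc (0:ℝ) (1/2), ‖2 * harm (n + 1) / ((n : ℝ) + 2) * t ^ (n + 1)‖)
      = 2 * b (n + 1) := by
    intro n
    rw [← hψval n]
    apply setIntegral_congr_fun measurableSet_Ioc
    intro t ht
    apply norm_of_nonneg
    have := harm_nonneg (n+1)
    have := ht.1.le
    positivity
  have hsumb1 : Summable (fun n : ℕ => b (n + 1)) := (summable_nat_add_iff 1).mpr hbs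
  have hψsum : Summable (fun n : ℕ =>
      ∫ t in Ioc (0:ℝ) (1/2), ‖2 * harm (n + 1) / ((n : ℝ) + 2) * t ^ (n + 1)‖) := by
    refine ((hsumb1.mul_left 2).congr fun n => ?_).congr fun n => (hψnorm n).symm
    rfl
  have key := MeasureTheory.integral_tsum_of_summable_integral_norm
    (F := fun (n : ℕ) (t : ℝ) => 2 * harm (n + 1) / ((n : ℝ) + 2) * t ^ (n + 1))
    (μ := volume.restrict (Ioc 0 (1/2))) hψInt hψsum
  have hpt : ∫ t in Ioc (0:ℝ) (1/2), (∑' n : ℕ, 2 * harm (n + 1) / ((n : ℝ) + 2) * t ^ (n + 1))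
      = ∫ t in Ioc (0:ℝ) (1/2), g1 t := by
    apply setIntegral_congr_fun measurableSet_Ioc
    intro t ht
    exact (psi_hasSum ht.1 (lt_of_le_of_lt ht.2 (by norm_num))).tsum_eq
  have hlhs : ∑' n : ℕ, ∫ t in Ioc (0:ℝ) (1/2), 2 * harm (n + 1) / ((n : ℝ) + 2) * t ^ (n + 1)
      = 2 * ∑' n : ℕ, b n := by
    rw [tsum_congr hψval, tsum_mul_left, hbs.tsum_eq_zero_add, hb0, zero_add]
  have hfinal : 2 * ∑' n : ℕ, b n = ∫ t in Ioc (0:ℝ) (1/2), g1 t := by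
    rw [← hlhs, key, hpt]
  have hcongr : (∑' n : ℕ, (1 / 2 : ℝ) ^ (n + 1) / ((n : ℝ) + 1) ^ 2 *
      ∑ m ∈ Finset.Ico 1 (n + 1), 1 / (m : ℝ)) = ∑' n : ℕ, b n := by
    refine tsum_congr fun n => ?_
    rw [harm_sum_eq, hb]
  rw [hcongr, intervalIntegral.integral_of_le (by norm_num : (0:ℝ) ≤ 1/2)]
  linarith [hfinal]

theorem stmt_13 :
    (∑' n : ℕ, (1 / 2 : ℝ) ^ (n + 1) / ((n : ℝ) + 1) ^ 2 *
        ∑ m ∈ Finset.Ico 1 (n + 1), 1 / (m : ℝ)) =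
      1 / 8 * zetaR 3 - 1 / 6 * (Real.log 2) ^ 3 := by
  rw [lhs_eq_half_P, P_val]
  ring
end
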